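/- arXiv:1211.0783 — 12 statements merged into one kernel-verified Lean document; each statement's English description precedes it below -/
import Mathlib

section
/- For every k ≥ 1 and every n ≥ 1, the sequence m ↦ T^k_{(n,m)} is decreasing in m; that is, T^k_{(n,m)} ≥ T^k_{(n,m+1)} for all m ≥ 1. -/
/-- The Cesàro operator on real sequences (indexed from 1; index 0 is unused):
`[T(a)]_n = (a_1 + ⋯ + a_n)/n`. -/
noncomputable def cesaro (a : ℕ → ℝ) : ℕ → ℝ :=
  fun n => (∑ i ∈ Finset.Icc 1 n, a i) / n

/-- The matrix entry `T^k_{(n,m)} = [T^k(e_m)]_n` where `e_m` is the sequence whose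
`m`-th term is `1` and all other terms are `0`. -/
noncomputable def cesaroEntry (k n m : ℕ) : ℝ :=
  (cesaro^[k] (fun i => if i = m then (1 : ℝ) else 0)) n

lemma cesaroEntry_succ (k n m : ℕ) :
    cesaroEntry (k + 1) n m = (∑ i ∈ Finset.Icc 1 n, cesaroEntry k i m) / n := by
  simp only [cesaroEntry, Function.iterate_succ', Function.comp_apply]
  rfl

lemma cesaroEntry_one (n m : ℕ) :
    cesaroEntry 1 n m = (if m ∈ Finset.Icc 1 n then (1:ℝ) else 0) / n := by
  simp [cesaroEntry, cesaro, Finset.sum_ite_eq']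

lemma cesaroEntry_nonneg (k n m : ℕ) : 0 ≤ cesaroEntry k n m := by
  induction k generalizing n with
  | zero => simp [cesaroEntry]; positivity
  | succ k ih =>
      rw [cesaroEntry_succ]
      apply div_nonneg _ (by positivity)
      exact Finset.sum_nonneg fun i _ => ih i

/-- For every `k ≥ 1` and `n ≥ 1`, the sequence `m ↦ T^k_{(n,m)}` is decreasing in `m`:
`T^k_{(n,m)} ≥ T^k_{(n,m+1)}` for all `m ≥ 1`. -/
theorem cesaroEntry_antitone (k n m : ℕ) (hk : 1 ≤ k) (hn : 1 ≤ n) (hm : 1 ≤ m) :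
    cesaroEntry k n (m + 1) ≤ cesaroEntry k n m := by
  induction k, hk using Nat.le_induction generalizing n with
  | base =>
      rw [cesaroEntry_one, cesaroEntry_one]
      by_cases h : m + 1 ≤ n
      · simp [Finset.mem_Icc, h, hm, le_trans (Nat.le_succ m) h, Nat.one_le_iff_ne_zero.mp hm]
      · have : ¬ (m + 1 ∈ Finset.Icc 1 n) := by simp [Finset.mem_Icc, h]
        rw [if_neg this, zero_div]
        positivity
  | succ k hk' ih =>
      rw [cesaroEntry_succ, cesaroEntry_succ]
      gcongr with i hi
      exact ih i (Finset.mem_Icc.mp hi).1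
end

section
/- For every k ≥ 1, every n ≥ 1, and every natural number m with m > n/2, it holds that T^k_{(n,m)} ≤ 2/n. -/
lemma cesaro_vanish (m : ℕ) : ∀ k i, i < m →
    (cesaro^[k] (fun i => if i = m then (1 : ℝ) else 0)) i = 0 := by
  intro k
  induction k with
  | zero => intro i hi; simp [Nat.ne_of_lt hi]
  | succ k ih =>
    intro i hi
    rw [Function.iterate_succ_apply']
    unfold cesaro
    rw [Finset.sum_eq_zero, zero_div]
    intro j hj
    exact ih j (lt_of_le_of_lt (Finset.mem_Icc.mp hj).2 hi)

lemma cesaro_main (m : ℕ) (hm : 1 ≤ m) : ∀ k, 1 ≤ k → ∀ n, 1 ≤ n → n < 2 * m →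
    (cesaro^[k] (fun i => if i = m then (1 : ℝ) else 0)) n ≤ 2 / n := by
  intro k hk
  induction k, hk using Nat.le_induction with
  | base =>
    intro n hn _
    have hnpos : (0:ℝ) < n := by exact_mod_cast hn
    simp only [Function.iterate_one]
    unfold cesaro
    rw [Finset.sum_ite_eq' (Finset.Icc 1 n) m (fun _ => (1:ℝ))]
    by_cases h : m ∈ Finset.Icc 1 n
    · rw [if_pos h, div_le_div_iff₀ hnpos hnpos]; nlinarith
    · rw [if_neg h, zero_div]; positivity
  | succ k hk ih =>
    intro n hn hn2
    have hnpos : (0:ℝ) < n := by exact_mod_cast hn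
    rw [Function.iterate_succ_apply']
    set b := cesaro^[k] (fun i => if i = m then (1 : ℝ) else 0) with hb
    show (∑ i ∈ Finset.Icc 1 n, b i) / n ≤ 2 / n
    have hsum : ∑ i ∈ Finset.Icc 1 n, b i ≤ 2 := by
      rcases Nat.lt_or_ge n m with h | h
      · rw [Finset.sum_eq_zero]
        · norm_num
        · intro j hj
          exact cesaro_vanish m k j (lt_of_le_of_lt (Finset.mem_Icc.mp hj).2 h)
      · have hsub : Finset.Icc m n ⊆ Finset.Icc 1 n := Finset.Icc_subset_Icc_left hm
        have heq : ∑ i ∈ Finset.Icc 1 n, b i = ∑ i ∈ Finset.Icc m n, b i := by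
          symm
          apply Finset.sum_subset hsub
          intro j hj hj'
          simp only [Finset.mem_Icc] at hj hj'
          exact cesaro_vanish m k j (by omega)
        rw [heq]
        have hmpos : (0:ℝ) < m := by exact_mod_cast hm
        have hbound : ∀ i ∈ Finset.Icc m n, b i ≤ 2 / m := by
          intro i hi
          simp only [Finset.mem_Icc] at hi
          have h1 : b i ≤ 2 / i := ih i (le_trans hm hi.1) (by omega)
          refine le_trans h1 ?_
          apply div_le_div_of_nonneg_left (by norm_num) hmpos
          exact_mod_cast hi.1
        calc ∑ i ∈ Finset.Icc m n, b i ≤ ∑ _i ∈ Finset.Icc m n, (2 / m : ℝ) :=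
              Finset.sum_le_sum hbound
          _ = (n + 1 - m : ℕ) * (2 / m) := by rw [Finset.sum_const, Nat.card_Icc, nsmul_eq_mul]
          _ ≤ (m : ℝ) * (2 / m) := by
              apply mul_le_mul_of_nonneg_right
              · exact_mod_cast (by omega : n + 1 - m ≤ m)
              · positivity
          _ = 2 := by field_simp
    gcongr

/-- For `k ≥ 1`, `n ≥ 1` and any natural number `m` with `m > n/2`,
we have `T^k_{(n,m)} ≤ 2/n`. -/
theorem cesaroEntry_le_two_div (k n m : ℕ) (hk : 1 ≤ k) (hn : 1 ≤ n)
    (hm : (n : ℝ) / 2 < (m : ℝ)) :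
    cesaroEntry k n m ≤ 2 / n := by
  have hn2 : n < 2 * m := by
    have : (n : ℝ) < 2 * m := by linarith
    exact_mod_cast this
  have hm1 : 1 ≤ m := by
    have h0 : (0:ℝ) < m := lt_of_le_of_lt (by positivity) hm
    exact_mod_cast Nat.one_le_cast.mp (by exact_mod_cast Nat.succ_le_of_lt (by exact_mod_cast h0))
  exact cesaro_main m hm1 k hk n hn hn2
end

section
/- For every k ≥ 1, every n ≥ 1, and every m ≥ 1, it holds that T^k_{(n,m)} ≤ (1/n)·[1 + (log n)/1! + (log n)²/2! + ⋯ + (log n)^{k−1}/(k−1)!], where log denotes the natural logarithm. -/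
/-- Partial sums of the exponential series. -/
noncomputable def P (k : ℕ) (y : ℝ) : ℝ := ∑ i ∈ Finset.range k, y ^ i / (Nat.factorial i)

lemma P_cont (k : ℕ) : Continuous (P k) := by
  unfold P
  exact continuous_finset_sum _ fun i _ => (continuous_pow i).div_const _

lemma P_succ (k : ℕ) (y : ℝ) : P (k+1) y = P k y + y ^ k / (Nat.factorial k) := by
  simp [P, Finset.sum_range_succ]

lemma P_zero' (k : ℕ) (hk : 1 ≤ k) : P k 0 = 1 := by
  induction k with
  | zero => omega
  | succ k ih =>
    rcases Nat.eq_or_lt_of_le hk with h | h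
    · simp [P, ← h]
    · rw [P_succ, ih (by omega)]
      simp [zero_pow (by omega : k ≠ 0)]

lemma P_hasDerivAt (k : ℕ) (y : ℝ) : HasDerivAt (P (k+1)) (P k y) y := by
  induction k with
  | zero =>
    have h : P 1 = fun _ : ℝ => (1:ℝ) := by funext y; simp [P]
    rw [h]
    simpa [P] using hasDerivAt_const y (1:ℝ)
  | succ k ih =>
    have h : P (k+2) = fun y : ℝ => P (k+1) y + y ^ (k+1) / (Nat.factorial (k+1)) := by
      funext y; exact P_succ (k+1) y
    rw [h]
    have h2 : HasDerivAt (fun y : ℝ => y ^ (k+1) / (Nat.factorial (k+1)))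
        ((k+1 : ℕ) * y ^ k / (Nat.factorial (k+1))) y :=
      (hasDerivAt_pow (k+1) y).div_const _
    have := ih.add h2
    refine this.congr_deriv ?_
    symm
    rw [P_succ]
    congr 1
    rw [Nat.factorial_succ]
    push_cast
    field_simp

lemma Plog_hasDerivAt (k : ℕ) {x : ℝ} (hx : 0 < x) :
    HasDerivAt (fun x => P (k+1) (Real.log x)) (P k (Real.log x) / x) x := by
  have := (P_hasDerivAt k (Real.log x)).comp x (Real.hasDerivAt_log hx.ne')
  exact this.congr_deriv (by simp [div_eq_mul_inv])

lemma g_hasDerivAt (k : ℕ) {x : ℝ} (hx : 0 < x) :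
    HasDerivAt (fun x => P (k+1) (Real.log x) / x)
      (-((Real.log x) ^ k / (Nat.factorial k)) / x ^ 2) x := by
  have := (Plog_hasDerivAt k hx).div (hasDerivAt_id x) hx.ne'
  refine this.congr_deriv ?_
  symm
  rw [P_succ]
  simp only [id]
  field_simp
  ring

lemma g_contOn (k : ℕ) :
    ContinuousOn (fun x => P (k+1) (Real.log x) / x) (Set.Ici (1:ℝ)) := by
  apply ContinuousOn.div
  · exact (P_cont (k+1)).comp_continuousOn (Real.continuousOn_log.mono (by
      intro x hx; simp at hx ⊢; linarith))
  · exact continuousOn_id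
  · intro x hx; simp at hx; linarith

lemma g_antitoneOn (k : ℕ) :
    AntitoneOn (fun x => P (k+1) (Real.log x) / x) (Set.Ici (1:ℝ)) := by
  apply antitoneOn_of_deriv_nonpos (convex_Ici 1) (g_contOn k)
  · intro x hx
    rw [interior_Ici] at hx
    have hx0 : 0 < x := by simp at hx; linarith
    exact ((g_hasDerivAt k hx0).differentiableAt).differentiableWithinAt
  · intro x hx
    rw [interior_Ici] at hx
    have hx1 : (1:ℝ) < x := hx
    have hx0 : 0 < x := by linarith
    rw [(g_hasDerivAt k hx0).deriv]
    apply div_nonpos_of_nonpos_of_nonneg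
    · simp only [neg_nonpos]
      apply div_nonneg (pow_nonneg (Real.log_nonneg hx1.le) k)
      positivity
    · positivity

lemma step_lemma (k : ℕ) {a : ℝ} (ha : 1 ≤ a) :
    P (k+1) (Real.log (a+1)) / (a+1) ≤ P (k+2) (Real.log (a+1)) - P (k+2) (Real.log a) := by
  have h01 : (0:ℝ) < a := by linarith
  have hsub : Set.uIcc a (a+1) = Set.Icc a (a+1) := Set.uIcc_of_le (by linarith)
  have hcont : ContinuousOn (fun x => P (k+1) (Real.log x) / x) (Set.Icc a (a+1)) :=
    (g_contOn k).mono (by intro x hx; simp at hx ⊢; linarith [hx.1])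
  have hint : IntervalIntegrable (fun x => P (k+1) (Real.log x) / x) MeasureTheory.volume a (a+1) := by
    rw [intervalIntegrable_iff_integrableOn_Icc_of_le (by linarith)]
    exact hcont.integrableOn_compact isCompact_Icc
  have hftc : ∫ x in a..(a+1), P (k+1) (Real.log x) / x
      = P (k+2) (Real.log (a+1)) - P (k+2) (Real.log a) := by
    refine intervalIntegral.integral_eq_sub_of_hasDerivAt (f := fun x => P (k+2) (Real.log x)) ?_ hint
    · intro x hx
      rw [hsub] at hx
      exact Plog_hasDerivAt (k+1) (by linarith [hx.1])
  rw [← hftc]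
  have hc : ∫ _ in a..(a+1), P (k+1) (Real.log (a+1)) / (a+1)
      = P (k+1) (Real.log (a+1)) / (a+1) := by
    simp
  rw [← hc]
  apply intervalIntegral.integral_mono_on (by linarith) (by
    apply intervalIntegrable_const) hint
  intro x hx
  exact g_antitoneOn k (by simp; linarith [hx.1]) (by simp; linarith) hx.2

lemma key_sum (k n : ℕ) (hn : 1 ≤ n) :
    ∑ j ∈ Finset.Icc 1 n, P (k+1) (Real.log j) / j ≤ P (k+2) (Real.log n) := by
  induction n, hn using Nat.le_induction with
  | base =>
    simp [P_zero' (k+1) (by omega), P_zero' (k+2) (by omega)]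
  | succ n hn ih =>
    rw [Finset.sum_Icc_succ_top (by omega : 1 ≤ n + 1)]
    have hstep := step_lemma k (a := (n:ℝ)) (by exact_mod_cast hn)
    push_cast
    push_cast at ih hstep
    linarith

lemma aux_bound (m : ℕ) : ∀ k, 1 ≤ k → ∀ n : ℕ, 1 ≤ n →
    (cesaro^[k] (fun i => if i = m then (1 : ℝ) else 0)) n ≤ P k (Real.log n) / n := by
  intro k hk
  induction k, hk using Nat.le_induction with
  | base =>
    intro n hn
    have hn0 : (0:ℝ) < n := by exact_mod_cast hn
    rw [Function.iterate_one]
    show (∑ i ∈ Finset.Icc 1 n, if i = m then (1:ℝ) else 0) / n ≤ _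
    have h1 : P 1 (Real.log n) = 1 := by simp [P]
    rw [h1]
    gcongr
    rw [Finset.sum_ite_eq' (Finset.Icc 1 n) m (fun _ => (1:ℝ))]
    split <;> norm_num
  | succ k hk ih =>
    intro n hn
    have hn0 : (0:ℝ) < n := by exact_mod_cast hn
    rw [Function.iterate_succ_apply']
    show (∑ j ∈ Finset.Icc 1 n, (cesaro^[k] fun i => if i = m then (1:ℝ) else 0) j) / n ≤ _
    obtain ⟨k', rfl⟩ : ∃ k', k = k' + 1 := ⟨k - 1, by omega⟩
    have hsum : (∑ j ∈ Finset.Icc 1 n, (cesaro^[k'+1] fun i => if i = m then (1:ℝ) else 0) j)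
        ≤ ∑ j ∈ Finset.Icc 1 n, P (k'+1) (Real.log j) / j := by
      apply Finset.sum_le_sum
      intro j hj
      exact ih j (Finset.mem_Icc.mp hj).1
    calc (∑ j ∈ Finset.Icc 1 n, (cesaro^[k'+1] fun i => if i = m then (1:ℝ) else 0) j) / n
        ≤ (∑ j ∈ Finset.Icc 1 n, P (k'+1) (Real.log j) / j) / n := by gcongr
      _ ≤ P (k'+2) (Real.log n) / n := by gcongr; exact key_sum k' n hn

/-- For every `k ≥ 1`, `n ≥ 1`, `m ≥ 1`:
`T^k_{(n,m)} ≤ (1/n)·[1 + (log n)/1! + ⋯ + (log n)^{k−1}/(k−1)!]`. -/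
theorem cesaroEntry_le_log_bound (k n m : ℕ) (hk : 1 ≤ k) (hn : 1 ≤ n) (hm : 1 ≤ m) :
    cesaroEntry k n m ≤
      (1 / n) * ∑ i ∈ Finset.range k, (Real.log n) ^ i / (Nat.factorial i) := by
  have h := aux_bound m k hk n hn
  unfold cesaroEntry
  have heq : (1 / (n:ℝ)) * ∑ i ∈ Finset.range k, (Real.log n) ^ i / (Nat.factorial i)
      = P k (Real.log n) / n := by
    unfold P; ring
  rw [heq]
  exact h
end

section
/- For every fixed k ≥ 1 and m ≥ 1, the matrix entries of the iterated Cesàro operator tend to zero along the rows: lim_{n→∞} T^k_{(n,m)} = 0. -/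
lemma cesaro_tendsto_zero {a : ℕ → ℝ}
    (h : Filter.Tendsto a Filter.atTop (nhds 0)) :
    Filter.Tendsto (cesaro a) Filter.atTop (nhds 0) := by
  have h' : Filter.Tendsto (fun i => a (i + 1)) Filter.atTop (nhds 0) :=
    h.comp (Filter.tendsto_add_atTop_nat 1)
  have := h'.cesaro
  refine this.congr (fun n => ?_)
  simp only [cesaro, div_eq_inv_mul]
  congr 1
  rw [show Finset.Icc 1 n = Finset.Ico 1 (n+1) by rw [Finset.Ico_add_one_right_eq_Icc],
    Finset.sum_Ico_eq_sum_range]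
  simp [Nat.add_comm]

lemma cesaro_iter_tendsto_zero (j : ℕ) {a : ℕ → ℝ}
    (h : Filter.Tendsto a Filter.atTop (nhds 0)) :
    Filter.Tendsto (cesaro^[j] a) Filter.atTop (nhds 0) := by
  induction j generalizing a with
  | zero => simpa using h
  | succ j ih =>
    rw [Function.iterate_succ_apply]
    exact ih (cesaro_tendsto_zero h)

/-- For fixed `k ≥ 1` and `m ≥ 1`, the matrix entries of `T^k` tend to `0` along the rows:
`lim_{n→∞} T^k_{(n,m)} = 0`. -/
theorem cesaroEntry_tendsto_zero (k m : ℕ) (hk : 1 ≤ k) (hm : 1 ≤ m) :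
    Filter.Tendsto (fun n => cesaroEntry k n m) Filter.atTop (nhds 0) := by
  obtain ⟨j, rfl⟩ := Nat.exists_eq_add_of_le hk
  have h1 : Filter.Tendsto (cesaro (fun i => if i = m then (1 : ℝ) else 0))
      Filter.atTop (nhds 0) := by
    have : cesaro (fun i => if i = m then (1 : ℝ) else 0)
        = fun n => (if m ≤ n then (1 : ℝ) else 0) / n := by
      funext n
      simp only [cesaro]
      congr 1
      rw [Finset.sum_ite_eq' (Finset.Icc 1 n) m fun _ => (1 : ℝ)]
      simp [Finset.mem_Icc, hm]
    rw [this]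
    have : Filter.Tendsto (fun n : ℕ => (1 : ℝ) / n) Filter.atTop (nhds 0) :=
      tendsto_one_div_atTop_nhds_zero_nat
    refine squeeze_zero_norm (fun n => ?_) this
    by_cases h : m ≤ n <;>
      simp [h, abs_div, Nat.cast_nonneg, abs_of_nonneg]
  have := cesaro_iter_tendsto_zero j h1
  refine this.congr (fun n => ?_)
  simp [cesaroEntry, Nat.add_comm 1 j, Function.iterate_succ_apply]
end

section
/- For all k, n, λ ≥ 1, it holds that ∑_{i=1}^{λ} T^k_{(n+λ, n+i)} ≥ (λ/(n+λ))^k · (1/k!). -/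
lemma cesaro_nonneg {a : ℕ → ℝ} (ha : ∀ i, 0 ≤ a i) : ∀ m, 0 ≤ cesaro a m := by
  intro m
  exact div_nonneg (Finset.sum_nonneg fun i _ => ha i) (by positivity)

lemma cesaro_iterate_nonneg {a : ℕ → ℝ} (ha : ∀ i, 0 ≤ a i) (k : ℕ) :
    ∀ m, 0 ≤ cesaro^[k] a m := by
  induction k with
  | zero => simpa using ha
  | succ k ih =>
    rw [Function.iterate_succ_apply']
    exact cesaro_nonneg ih

lemma cesaro_sum {ι : Type*} (s : Finset ι) (f : ι → ℕ → ℝ) :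
    cesaro (fun x => ∑ i ∈ s, f i x) = fun m => ∑ i ∈ s, cesaro (f i) m := by
  funext m
  unfold cesaro
  rw [Finset.sum_comm, Finset.sum_div]

lemma cesaro_iterate_sum {ι : Type*} (s : Finset ι) (f : ι → ℕ → ℝ) (k : ℕ) :
    cesaro^[k] (fun x => ∑ i ∈ s, f i x) = fun m => ∑ i ∈ s, cesaro^[k] (f i) m := by
  induction k with
  | zero => simp
  | succ k ih =>
    rw [Function.iterate_succ_apply', ih, cesaro_sum]
    funext m
    simp [Function.iterate_succ_apply']

lemma sum_pow_ge (j s : ℕ) :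
    ((s : ℝ)) ^ (j + 1) / (j + 1) ≤ ∑ t ∈ Finset.Icc 1 s, (t : ℝ) ^ j := by
  induction s with
  | zero => simp
  | succ s ih =>
    rw [Finset.sum_Icc_succ_top (by omega)]
    have hsp : (0 : ℝ) < (s : ℝ) + 1 := by positivity
    have hx : (-2 : ℝ) ≤ -(1 / ((s : ℝ) + 1)) := by
      have h1 : (1:ℝ) / ((s:ℝ)+1) ≤ 1 := by
        rw [div_le_one hsp]; linarith
      linarith
    have hb := one_add_mul_le_pow hx (j + 1)
    have h1 : (1 : ℝ) + (-(1 / ((s : ℝ) + 1))) = (s : ℝ) / ((s : ℝ) + 1) := by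
      field_simp
      ring
    rw [h1, div_pow] at hb
    push_cast at hb
    have hpos : (0:ℝ) < ((s:ℝ)+1) ^ (j+1) := by positivity
    have h2 : (1/((s:ℝ)+1)) * ((s:ℝ)+1)^(j+1) = ((s:ℝ)+1)^j := by
      rw [pow_succ]; field_simp
    have hmul := mul_le_mul_of_nonneg_right hb (le_of_lt hpos)
    rw [div_mul_cancel₀ _ (ne_of_gt hpos)] at hmul
    have key : ((s:ℝ) + 1) ^ (j + 1) ≤ (s:ℝ) ^ (j+1) + ((j:ℝ)+1) * ((s:ℝ)+1) ^ j := by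
      nlinarith [hmul, h2]
    have hj : (0:ℝ) < (j:ℝ) + 1 := by positivity
    have ih' : (s:ℝ)^(j+1) ≤ (∑ t ∈ Finset.Icc 1 s, (t:ℝ)^j) * ((j:ℝ)+1) :=
      (div_le_iff₀ hj).mp ih
    push_cast
    rw [div_le_iff₀ hj]
    nlinarith [key, ih']

lemma cesaro_key (n l : ℕ) (hn : 1 ≤ n) :
    ∀ j m, n < m → m ≤ n + l →
      ((m - n : ℕ) : ℝ) ^ j / (Nat.factorial j) ≤
        (m : ℝ) ^ j *
          (cesaro^[j] (fun x => ∑ i ∈ Finset.Icc 1 l, (if x = n + i then (1:ℝ) else 0)) m) := by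
  set a : ℕ → ℝ := fun x => ∑ i ∈ Finset.Icc 1 l, (if x = n + i then (1:ℝ) else 0) with ha
  have hanneg : ∀ x, 0 ≤ a x := by
    intro x; apply Finset.sum_nonneg; intro i _; positivity
  intro j
  induction j with
  | zero =>
    intro m hm1 hm2
    simp only [pow_zero, Nat.factorial_zero, Function.iterate_zero, id_eq, one_mul, Nat.cast_one,
      div_one]
    have hone : a m = 1 := by
      show (∑ i ∈ Finset.Icc 1 l, if m = n + i then (1:ℝ) else 0) = 1
      rw [Finset.sum_eq_single (m - n)]
      · have : m = n + (m - n) := by omega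
        simp [← this]
      · intro i hi hne
        have : m ≠ n + i := by
          have := Finset.mem_Icc.mp hi
          omega
        simp [this]
      · intro h
        exact absurd (Finset.mem_Icc.mpr ⟨by omega, by omega⟩) h
    rw [hone]
  | succ j ih =>
    intro m hm1 hm2
    have hm0 : 0 < m := by omega
    have hmR : (0:ℝ) < (m:ℝ) := by exact_mod_cast hm0
    rw [Function.iterate_succ_apply']
    set b : ℕ → ℝ := cesaro^[j] a with hb
    have hbnneg : ∀ x, 0 ≤ b x := cesaro_iterate_nonneg hanneg j
    have hces : cesaro b m = (∑ i ∈ Finset.Icc 1 m, b i) / m := rfl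
    -- split the sum
    have hsplit : ∑ i ∈ Finset.Icc 1 n, b i + ∑ i ∈ Finset.Ioc n m, b i
        = ∑ i ∈ Finset.Icc 1 m, b i := by
      rw [show Finset.Icc 1 n = Finset.Ioc 0 n from Finset.Icc_add_one_left_eq_Ioc 0 n,
        show Finset.Icc 1 m = Finset.Ioc 0 m from Finset.Icc_add_one_left_eq_Ioc 0 m]
      exact Finset.sum_Ioc_consecutive _ (by omega) (by omega)
    have h1 : (0:ℝ) ≤ ∑ i ∈ Finset.Icc 1 n, b i :=
      Finset.sum_nonneg fun i _ => hbnneg i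
    -- termwise bound on Ioc n m
    have h2 : ∑ i ∈ Finset.Ioc n m, ((i - n : ℕ) : ℝ) ^ j / ((m:ℝ)^j * (Nat.factorial j))
        ≤ ∑ i ∈ Finset.Ioc n m, b i := by
      apply Finset.sum_le_sum
      intro i hi
      obtain ⟨hi1, hi2⟩ := Finset.mem_Ioc.mp hi
      have hiR : (0:ℝ) < (i:ℝ) := by
        have : 0 < i := by omega
        exact_mod_cast this
      have hih := ih i hi1 (by omega)
      have hile : (i:ℝ) ^ j ≤ (m:ℝ) ^ j := by
        apply pow_le_pow_left₀ (by positivity)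
        exact_mod_cast hi2
      have hd1 : ((i - n : ℕ) : ℝ) ^ j / ((m:ℝ)^j * (Nat.factorial j))
          ≤ ((i - n : ℕ) : ℝ) ^ j / ((i:ℝ)^j * (Nat.factorial j)) := by
        apply div_le_div_of_nonneg_left (by positivity) (by positivity)
        have : (0:ℝ) < (Nat.factorial j : ℝ) := by positivity
        exact mul_le_mul_of_nonneg_right hile (le_of_lt this)
      refine hd1.trans ?_
      rw [div_le_iff₀ (by positivity)]
      calc ((i - n : ℕ) : ℝ) ^ j = (((i - n : ℕ) : ℝ) ^ j / (Nat.factorial j)) * (Nat.factorial j) := by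
            field_simp
        _ ≤ ((i:ℝ)^j * b i) * (Nat.factorial j) := by
            apply mul_le_mul_of_nonneg_right hih (by positivity)
        _ = b i * ((i:ℝ)^j * (Nat.factorial j)) := by ring
    -- reindex
    have h3 : ∑ i ∈ Finset.Ioc n m, ((i - n : ℕ) : ℝ) ^ j
        = ∑ t ∈ Finset.Icc 1 (m - n), (t : ℝ) ^ j := by
      have him : Finset.Ioc n m = Finset.map (addLeftEmbedding n) (Finset.Icc 1 (m - n)) := by
        rw [Finset.map_add_left_Icc, ← Finset.Icc_add_one_left_eq_Ioc]
        congr 1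
        omega
      rw [him, Finset.sum_map]
      apply Finset.sum_congr rfl
      intro t ht
      simp [addLeftEmbedding]
    have h4 := sum_pow_ge j (m - n)
    -- combine
    have h5 : ((m - n : ℕ):ℝ) ^ (j+1) / (j+1) / ((m:ℝ)^j * (Nat.factorial j))
        ≤ ∑ i ∈ Finset.Ioc n m, b i := by
      refine le_trans ?_ h2
      rw [← Finset.sum_div, h3]
      gcongr
    have hfac : ((Nat.factorial (j+1) : ℕ) : ℝ) = ((j:ℝ)+1) * (Nat.factorial j) := by
      rw [Nat.factorial_succ]; push_cast; ring
    calc ((m - n : ℕ) : ℝ) ^ (j+1) / (Nat.factorial (j+1))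
        = (m:ℝ)^(j+1) * (((m - n : ℕ):ℝ) ^ (j+1) / ((j:ℝ)+1) / ((m:ℝ)^j * (Nat.factorial j)) / m) := by
          rw [hfac]
          field_simp
          ring
      _ ≤ (m:ℝ)^(j+1) * ((∑ i ∈ Finset.Icc 1 m, b i) / m) := by
          gcongr
          calc ((m - n : ℕ):ℝ) ^ (j+1) / ((j:ℝ)+1) / ((m:ℝ)^j * (Nat.factorial j))
              ≤ ∑ i ∈ Finset.Ioc n m, b i := h5
            _ ≤ ∑ i ∈ Finset.Icc 1 m, b i := by linarith [hsplit, h1]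
      _ = (m:ℝ)^(j+1) * (cesaro b m) := by rw [hces]

/-- For all `k, n, λ ≥ 1`: `∑_{i=1}^{λ} T^k_{(n+λ, n+i)} ≥ (λ/(n+λ))^k · (1/k!)`. -/
theorem cesaroEntry_sum_lower_bound (k n l : ℕ) (hk : 1 ≤ k) (hn : 1 ≤ n) (hl : 1 ≤ l) :
    ((l : ℝ) / ((n + l : ℕ) : ℝ)) ^ k * (1 / (Nat.factorial k)) ≤
      ∑ i ∈ Finset.Icc 1 l, cesaroEntry k (n + l) (n + i) := by
  have hsum : ∑ i ∈ Finset.Icc 1 l, cesaroEntry k (n + l) (n + i)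
      = cesaro^[k] (fun x => ∑ i ∈ Finset.Icc 1 l, (if x = n + i then (1:ℝ) else 0)) (n + l) := by
    rw [cesaro_iterate_sum (Finset.Icc 1 l) (fun i x => if x = n + i then (1:ℝ) else 0) k]
    rfl
  have hkey := cesaro_key n l hn k (n + l) (by omega) le_rfl
  rw [show n + l - n = l by omega] at hkey
  have hNpos : (0:ℝ) < ((n + l : ℕ) : ℝ) := by
    have : 0 < n + l := by omega
    exact_mod_cast this
  have heq : ((l : ℝ) / ((n + l : ℕ) : ℝ)) ^ k * (1 / (Nat.factorial k))
      = ((l:ℝ) ^ k / (Nat.factorial k)) / ((n + l : ℕ) : ℝ) ^ k := by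
    rw [div_pow]; ring
  rw [heq, hsum, div_le_iff₀ (by positivity)]
  linarith [hkey]
end

section
/- For all k, n, λ ≥ 1 with λ ≤ n, it holds that ∑_{i=1}^{λ} T^k_{(n+λ, n+i)} ≤ 2λ/(n+λ). -/
lemma cesaroEntry_le (k : ℕ) (hk : 1 ≤ k) (m : ℕ) (hm : 1 ≤ m) :
    ∀ N : ℕ, cesaroEntry k N m ≤ 1 / m := by
  induction k, hk using Nat.le_induction with
  | base =>
    intro N
    simp only [cesaroEntry, Function.iterate_one, cesaro]
    rw [Finset.sum_ite_eq' (Finset.Icc 1 N) m (fun _ => (1 : ℝ))]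
    by_cases h : m ∈ Finset.Icc 1 N
    · rw [if_pos h]
      have hN : m ≤ N := (Finset.mem_Icc.mp h).2
      apply one_div_le_one_div_of_le
      · exact_mod_cast hm
      · exact_mod_cast hN
    · rw [if_neg h]
      have : (0:ℝ) ≤ 1 / m := by positivity
      simpa using this
  | succ k hk ih =>
    intro N
    have h1 : cesaroEntry (k + 1) N m =
        (∑ j ∈ Finset.Icc 1 N, cesaroEntry k j m) / N := by
      simp only [cesaroEntry, Function.iterate_succ_apply', cesaro]
    rw [h1]
    rcases Nat.eq_zero_or_pos N with hN | hN
    · subst hN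
      simp
    · have hsum : ∑ j ∈ Finset.Icc 1 N, cesaroEntry k j m ≤ N * (1 / m) := by
        calc ∑ j ∈ Finset.Icc 1 N, cesaroEntry k j m
            ≤ ∑ j ∈ Finset.Icc 1 N, (1 / m : ℝ) := Finset.sum_le_sum fun j _ => ih j
          _ = N * (1 / m) := by
              rw [Finset.sum_const, Nat.card_Icc]
              simp
      have hNpos : (0 : ℝ) < N := by exact_mod_cast hN
      rw [div_le_iff₀ hNpos]
      calc ∑ j ∈ Finset.Icc 1 N, cesaroEntry k j m ≤ N * (1 / m) := hsum
        _ = 1 / m * N := by ring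

/-- For all `k, n, λ ≥ 1` with `λ ≤ n`: `∑_{i=1}^{λ} T^k_{(n+λ, n+i)} ≤ 2λ/(n+λ)`. -/
theorem cesaroEntry_sum_upper_bound (k n l : ℕ) (hk : 1 ≤ k) (hn : 1 ≤ n) (hl : 1 ≤ l)
    (hln : l ≤ n) :
    ∑ i ∈ Finset.Icc 1 l, cesaroEntry k (n + l) (n + i) ≤
      2 * (l : ℝ) / ((n + l : ℕ) : ℝ) := by
  have key : ∀ i ∈ Finset.Icc 1 l,
      cesaroEntry k (n + l) (n + i) ≤ 2 / ((n + l : ℕ) : ℝ) := by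
    intro i hi
    have hi1 : 1 ≤ i := (Finset.mem_Icc.mp hi).1
    have h1 : cesaroEntry k (n + l) (n + i) ≤ 1 / ((n + i : ℕ) : ℝ) :=
      cesaroEntry_le k hk (n + i) (by omega) (n + l)
    have h2 : (1 : ℝ) / ((n + i : ℕ) : ℝ) ≤ 2 / ((n + l : ℕ) : ℝ) := by
      rw [div_le_div_iff₀ (by positivity) (by positivity)]
      have h3 : (n + l : ℕ) ≤ 2 * (n + i) := by omega
      have h4 : ((n + l : ℕ) : ℝ) ≤ 2 * ((n + i : ℕ) : ℝ) := by exact_mod_cast h3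
      nlinarith
    linarith
  calc ∑ i ∈ Finset.Icc 1 l, cesaroEntry k (n + l) (n + i)
      ≤ ∑ i ∈ Finset.Icc 1 l, (2 / ((n + l : ℕ) : ℝ)) := Finset.sum_le_sum key
    _ = l * (2 / ((n + l : ℕ) : ℝ)) := by
        rw [Finset.sum_const, Nat.card_Icc]; simp
    _ = 2 * (l : ℝ) / ((n + l : ℕ) : ℝ) := by ring
end

section
/- Let k, n, λ, Λ ≥ 1 be natural numbers with λ < Λ and Λ ≤ n. For τ = 1, 2, …, λ define a_τ = T^k_{(n+λ, n+τ)} / T^k_{(n+Λ, n+τ)}. Then a_τ is decreasing in τ, and moreover 2 ≥ a_1 ≥ a_2 ≥ ⋯ ≥ a_λ > 0. -/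
noncomputable def Hh : ℕ → ℕ → ℕ → ℝ
  | 0, _, _ => 1
  | r+1, s, X => ∑ j ∈ Finset.Icc s X, (1 / (j:ℝ)) * Hh r s j

lemma Hh_zero (s X : ℕ) : Hh 0 s X = 1 := rfl

lemma Hh_succ (r s X : ℕ) : Hh (r+1) s X = ∑ j ∈ Finset.Icc s X, (1 / (j:ℝ)) * Hh r s j := rfl

lemma Hh_nonneg : ∀ (r s X : ℕ), 0 ≤ Hh r s X := by
  intro r
  induction r with
  | zero => intro s X; rw [Hh_zero]; norm_num
  | succ r ih =>
    intro s X
    rw [Hh_succ]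
    refine Finset.sum_nonneg fun j _ => mul_nonneg (by positivity) (ih s j)

lemma Hh_eq_zero {r s X : ℕ} (h : X < s) : Hh (r+1) s X = 0 := by
  rw [Hh_succ, Finset.Icc_eq_empty (by omega), Finset.sum_empty]

lemma Hh_pos {s X : ℕ} (hs : 1 ≤ s) (hX : s ≤ X) : ∀ r, 0 < Hh r s X := by
  intro r
  induction r with
  | zero => rw [Hh_zero]; norm_num
  | succ r ih =>
    rw [Hh_succ]
    refine Finset.sum_pos' (fun j _ => mul_nonneg (by positivity) (Hh_nonneg r s j)) ?_
    refine ⟨X, Finset.mem_Icc.mpr ⟨hX, le_rfl⟩, mul_pos ?_ ih⟩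
    have : (0:ℝ) < X := by exact_mod_cast Nat.lt_of_lt_of_le hs hX
    positivity

lemma Hh_mono (r s : ℕ) {X X' : ℕ} (h : X ≤ X') : Hh r s X ≤ Hh r s X' := by
  cases r with
  | zero => rw [Hh_zero, Hh_zero]
  | succ r =>
    rw [Hh_succ, Hh_succ]
    refine Finset.sum_le_sum_of_subset_of_nonneg (Finset.Icc_subset_Icc_right h)
      fun j _ _ => mul_nonneg (by positivity) (Hh_nonneg r s j)

lemma Hh_top {s D : ℕ} (h : s ≤ D + 1) (u : ℕ) :
    Hh (u+1) s (D+1) = Hh (u+1) s D + (1 / ((D:ℝ)+1)) * Hh u s (D+1) := by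
  rw [Hh_succ, Hh_succ, Finset.sum_Icc_succ_top h]
  push_cast
  ring

lemma Hh_self (s : ℕ) (u : ℕ) : Hh (u+1) s s = (1 / (s:ℝ)) * Hh u s s := by
  rw [Hh_succ, Finset.Icc_self, Finset.sum_singleton]

lemma Hh_bot (s : ℕ) : ∀ u X, s ≤ X →
    Hh (u+1) s X = Hh (u+1) (s+1) X + (1 / (s:ℝ)) * Hh u s X := by
  intro u
  induction u with
  | zero =>
    intro X h
    have hins : Finset.Icc s X = insert s (Finset.Icc (s+1) X) := by
      ext x; simp only [Finset.mem_Icc, Finset.mem_insert]; omega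
    have hnotmem : s ∉ Finset.Icc (s+1) X := by simp
    rw [Hh_succ, Hh_succ, hins, Finset.sum_insert hnotmem]
    simp only [Hh_zero]
    ring
  | succ u ih =>
    intro X h
    have hins : Finset.Icc s X = insert s (Finset.Icc (s+1) X) := by
      ext x; simp only [Finset.mem_Icc, Finset.mem_insert]; omega
    have hnotmem : s ∉ Finset.Icc (s+1) X := by simp
    have hcong : ∑ j ∈ Finset.Icc (s+1) X, (1/(j:ℝ)) * Hh (u+1) s j
        = ∑ j ∈ Finset.Icc (s+1) X,
            ((1/(j:ℝ)) * Hh (u+1) (s+1) j + (1/(s:ℝ)) * ((1/(j:ℝ)) * Hh u s j)) := by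
      refine Finset.sum_congr rfl fun j hj => ?_
      simp only [Finset.mem_Icc] at hj
      rw [ih j (by omega)]
      ring
    rw [Hh_succ (u+1) s X, hins, Finset.sum_insert hnotmem, hcong,
      Finset.sum_add_distrib, ← Finset.mul_sum]
    have e1 : Hh (u+1+1) (s+1) X = ∑ j ∈ Finset.Icc (s+1) X, (1/(j:ℝ)) * Hh (u+1) (s+1) j :=
      Hh_succ _ _ _
    have e2 : Hh (u+1) s X = (1/(s:ℝ)) * Hh u s s
        + ∑ j ∈ Finset.Icc (s+1) X, (1/(j:ℝ)) * Hh u s j := by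
      rw [Hh_succ, hins, Finset.sum_insert hnotmem]
    have e3 : Hh (u+1) s s = (1/(s:ℝ)) * Hh u s s := Hh_self s u
    rw [e1, e2, e3]
    ring

lemma Hh_G_trivial {s X : ℕ} (hX : X < s) (a d e : ℕ) :
    Hh a s X * Hh (a+d+e) s X ≤ Hh (a+d) s X * Hh (a+e) s X := by
  rcases Nat.eq_zero_or_pos d with hd | hd
  · subst hd; exact le_of_eq rfl
  rcases Nat.eq_zero_or_pos e with he | he
  · subst he; exact le_of_eq (by ring_nf)
  obtain ⟨u, hu⟩ : ∃ u, a + d + e = u + 1 := ⟨a + d + e - 1, by omega⟩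
  rw [hu, Hh_eq_zero hX, mul_zero]
  exact mul_nonneg (Hh_nonneg _ _ _) (Hh_nonneg _ _ _)

lemma Hh_G {s : ℕ} (hs : 1 ≤ s) :
    ∀ X a d e, Hh a s X * Hh (a+d+e) s X ≤ Hh (a+d) s X * Hh (a+e) s X := by
  intro X
  induction X with
  | zero => exact fun a d e => Hh_G_trivial (by omega) a d e
  | succ X IH =>
    by_cases hsX : s ≤ X + 1
    swap
    · exact fun a d e => Hh_G_trivial (by omega) a d e
    -- notation
    have hy : (0:ℝ) ≤ 1 / ((X:ℝ)+1) := by positivity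
    have hrec : ∀ u, Hh (u+1) s (X+1) = Hh (u+1) s X + (1/((X:ℝ)+1)) * Hh u s (X+1) :=
      fun u => Hh_top hsX u
    -- the cross inequality B
    have B : ∀ r j, Hh (r+j+2) s X * Hh r s (X+1) ≤ Hh (r+j+1) s X * Hh (r+1) s (X+1) := by
      intro r
      induction r with
      | zero =>
        intro j
        have g1 := IH 0 (j+1) 1
        simp only [Nat.zero_add, Hh_zero, one_mul, mul_one] at g1 ⊢
        rw [hrec 0, Hh_zero]
        have hnn := Hh_nonneg (j+1) s X
        nlinarith [g1, hy, hnn]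
      | succ r ihB =>
        intro j
        have e1 : r + 1 + j + 2 = r + (j+1) + 2 := by omega
        have e2 : r + 1 + j + 1 = r + (j+1) + 1 := by omega
        have e5 : r + 1 + 1 = r + 2 := by omega
        have h2 := hrec (r+1)
        rw [e5] at h2
        rw [e1, e2, hrec r, e5, h2]
        have g2 := ihB (j+1)
        have g1 := IH (r+1) (j+1) 1
        have e3 : r + 1 + (j+1) + 1 = r + (j+1) + 2 := by omega
        have e4 : r + 1 + (j+1) = r + (j+1) + 1 := by omega
        rw [e3, e4, e5] at g1
        -- g1 : Hh (r+1) X * Hh (r+(j+1)+2) X ≤ Hh (r+(j+1)+1) X * Hh (r+2) X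
        nlinarith [mul_le_mul_of_nonneg_left g2 hy, g1]
    -- log-concavity at X+1
    have LC : ∀ r, Hh r s (X+1) * Hh (r+2) s (X+1) ≤ Hh (r+1) s (X+1) * Hh (r+1) s (X+1) := by
      intro r
      have b0 := B r 0
      simp only [Nat.add_zero] at b0
      -- b0 : Hh (r+2) X * Hh r (X+1) ≤ Hh (r+1) X * Hh (r+1) (X+1)
      have h1 := hrec r
      have h2 := hrec (r+1)
      have e5 : r + 1 + 1 = r + 2 := by omega
      rw [e5] at h2
      rw [h2]
      rw [h1] at b0 ⊢
      nlinarith [b0]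
    have pos' : ∀ u, 0 < Hh u s (X+1) := fun u => Hh_pos hs hsX u
    -- ratio monotonicity R
    have R : ∀ u w, Hh u s (X+1) * Hh (u+w+1) s (X+1) ≤ Hh (u+1) s (X+1) * Hh (u+w) s (X+1) := by
      intro u w
      induction w with
      | zero => rw [Nat.add_zero]; ring_nf; exact le_rfl
      | succ w ihw =>
        have lc := LC (u+w)
        have e6 : u + w + 2 = u + (w+1) + 1 := by omega
        have e7 : u + w + 1 = u + (w+1) := by omega
        rw [e6, e7] at lc
        rw [e7] at ihw
        -- lc : Hh (u+w) * Hh (u+(w+1)+1) ≤ Hh (u+(w+1)) * Hh (u+(w+1))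
        -- ihw : Hh u * Hh (u+(w+1)) ≤ Hh (u+1) * Hh (u+w)
        have key := mul_le_mul ihw lc
          (mul_nonneg (Hh_nonneg _ _ _) (Hh_nonneg _ _ _))
          (mul_nonneg (Hh_nonneg _ _ _) (Hh_nonneg _ _ _))
        have hp := mul_pos (pos' (u+w)) (pos' (u+(w+1)))
        nlinarith [key, hp]
    -- general log-concavity at X+1
    intro a d e
    induction d with
    | zero => rw [Nat.add_zero]; ring_nf; exact le_rfl
    | succ d ihd =>
      have r1 := R (a+d) e
      have e8 : a + d + e + 1 = a + (d+1) + e := by omega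
      have e9 : a + d + 1 = a + (d+1) := by omega
      rw [e8, e9] at r1
      -- r1 : Hh (a+d) * Hh (a+(d+1)+e) ≤ Hh (a+(d+1)) * Hh (a+d+e)
      have key := mul_le_mul ihd r1
        (mul_nonneg (Hh_nonneg _ _ _) (Hh_nonneg _ _ _))
        (mul_nonneg (Hh_nonneg _ _ _) (Hh_nonneg _ _ _))
      have hp := mul_pos (pos' (a+d)) (pos' (a+d+e))
      nlinarith [key, hp]

lemma Hh_P {s : ℕ} (hs : 1 ≤ s) :
    ∀ t A q d e, Hh (q+e+d) s A * Hh q s (A+t) ≤ Hh (q+d) s A * Hh (q+e) s (A+t) := by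
  intro t
  induction t with
  | zero =>
    intro A q d e
    simp only [Nat.add_zero]
    have g := Hh_G hs A q d e
    rw [show q+e+d = q+d+e from by omega]
    nlinarith [g]
  | succ t IHt =>
    intro A q
    induction q with
    | zero =>
      intro d e
      simp only [Nat.zero_add, Hh_zero, mul_one]
      have g := Hh_G hs A 0 d e
      simp only [Nat.zero_add, Hh_zero, one_mul] at g
      rw [show e+d = d+e from by omega]
      calc Hh (d+e) s A ≤ Hh d s A * Hh e s A := g
        _ ≤ Hh d s A * Hh e s (A+(t+1)) := by
            exact mul_le_mul_of_nonneg_left (Hh_mono e s (by omega)) (Hh_nonneg d s A)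
    | succ q ihq =>
      intro d e
      by_cases hsab : s ≤ A + (t+1)
      · have eA : A + (t+1) = A + t + 1 := by omega
        rw [eA]
        have h1 := IHt A (q+1) d e
        have h2 := ihq (d+1) e
        rw [show q+e+(d+1) = q+1+e+d from by omega,
            show q+(d+1) = q+1+d from by omega, eA] at h2
        have r1 := Hh_top (show s ≤ A + t + 1 from by omega) q
        have r2 := Hh_top (show s ≤ A + t + 1 from by omega) (q+e)
        rw [show q+e+1 = q+1+e from by omega] at r2
        rw [r1, r2]
        have hy : (0:ℝ) ≤ 1 / ((A:ℝ)+(t:ℝ)+1) := by positivity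
        have hcast : ((A+t : ℕ):ℝ) = (A:ℝ) + (t:ℝ) := by push_cast; ring
        rw [hcast] at r1 r2 ⊢
        nlinarith [h1, mul_le_mul_of_nonneg_left h2 hy]
      · rw [show q+1+e+d = q+e+d+1 from by omega, Hh_eq_zero (show A < s from by omega),
          zero_mul]
        exact mul_nonneg (Hh_nonneg _ _ _) (Hh_nonneg _ _ _)

lemma Hh_J {m A B : ℕ} (hm : 1 ≤ m) (hA : m + 1 ≤ A) (hAB : A ≤ B) :
    ∀ q r, q ≤ r → Hh r (m+1) A * Hh q m B ≤ Hh r (m+1) B * Hh q m A := by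
  intro q
  induction q with
  | zero =>
    intro r _
    simp only [Hh_zero, mul_one]
    exact Hh_mono r (m+1) hAB
  | succ q ih =>
    intro r hqr
    have e1 := Hh_bot m q A (by omega)
    have e2 := Hh_bot m q B (by omega)
    obtain ⟨e0, he0⟩ : ∃ e0, r = q+1+e0 := ⟨r - (q+1), by omega⟩
    obtain ⟨t0, ht0⟩ : ∃ t0, B = A + t0 := ⟨B - A, by omega⟩
    have K := Hh_P (s := m+1) (by omega) t0 A (q+1) 0 e0
    simp only [Nat.add_zero] at K
    rw [← he0, ← ht0] at K
    -- K : Hh r (m+1) A * Hh (q+1) (m+1) B ≤ Hh (q+1) (m+1) A * Hh r (m+1) B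
    have ihq := ih r (by omega)
    have hminv : (0:ℝ) ≤ 1/(m:ℝ) := by positivity
    rw [e1, e2]
    nlinarith [K, mul_le_mul_of_nonneg_left ihq hminv]

lemma cesaro_iterate {m : ℕ} (hm : 1 ≤ m) :
    ∀ r N, (cesaro^[r+1] (fun i => if i = m then (1:ℝ) else 0)) N
      = if m ≤ N then Hh r m N / N else 0 := by
  intro r
  induction r with
  | zero =>
    intro N
    rw [Function.iterate_one]
    simp only [cesaro]
    rw [Finset.sum_ite_eq' (Finset.Icc 1 N) m (fun _ => (1:ℝ))]
    by_cases h : m ≤ N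
    · simp [Finset.mem_Icc, hm, h, Hh_zero]
    · simp [Finset.mem_Icc, h]
  | succ r ih =>
    intro N
    rw [Function.iterate_succ_apply']
    simp only [cesaro]
    have hsum : ∑ j ∈ Finset.Icc 1 N, (cesaro^[r+1] (fun i => if i = m then (1:ℝ) else 0)) j
        = Hh (r+1) m N := by
      rw [Finset.sum_congr rfl (fun j _ => ih j)]
      rw [← Finset.sum_filter]
      have hfil : (Finset.Icc 1 N).filter (fun j => m ≤ j) = Finset.Icc m N := by
        ext x; simp only [Finset.mem_filter, Finset.mem_Icc]; omega
      rw [hfil, Hh_succ]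
      exact Finset.sum_congr rfl fun j _ => by rw [div_eq_mul_inv, one_div, mul_comm]
    rw [hsum]
    by_cases h : m ≤ N
    · rw [if_pos h]
    · rw [if_neg h, Hh_eq_zero (by omega), zero_div]

lemma cesaroEntry_eq {k N m : ℕ} (hk : 1 ≤ k) (hm : 1 ≤ m) (hmN : m ≤ N) :
    cesaroEntry k N m = Hh (k-1) m N / N := by
  obtain ⟨r, rfl⟩ : ∃ r, k = r + 1 := ⟨k-1, by omega⟩
  rw [cesaroEntry, cesaro_iterate hm r N, if_pos hmN]
  simp

/-- Let `k, n, λ, Λ ≥ 1` with `λ < Λ` and `Λ ≤ n`. For `τ = 1, …, λ` set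
`a_τ = T^k_{(n+λ, n+τ)} / T^k_{(n+Λ, n+τ)}`. Then `a_τ` is decreasing in `τ` and
`2 ≥ a_1 ≥ ⋯ ≥ a_λ > 0`. -/
theorem cesaroEntry_ratio_decreasing (k n l L : ℕ) (hk : 1 ≤ k) (hn : 1 ≤ n) (hl : 1 ≤ l)
    (hlL : l < L) (hLn : L ≤ n) :
    (∀ τ : ℕ, 1 ≤ τ → τ + 1 ≤ l →
      cesaroEntry k (n + l) (n + (τ + 1)) / cesaroEntry k (n + L) (n + (τ + 1)) ≤
        cesaroEntry k (n + l) (n + τ) / cesaroEntry k (n + L) (n + τ)) ∧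
    (cesaroEntry k (n + l) (n + 1) / cesaroEntry k (n + L) (n + 1) ≤ 2) ∧
    (∀ τ : ℕ, 1 ≤ τ → τ ≤ l →
      0 < cesaroEntry k (n + l) (n + τ) / cesaroEntry k (n + L) (n + τ)) := by
  have ha : (0:ℝ) < ((n+l : ℕ):ℝ) := by exact_mod_cast (by omega : 0 < n + l)
  have hb : (0:ℝ) < ((n+L : ℕ):ℝ) := by exact_mod_cast (by omega : 0 < n + L)
  refine ⟨?_, ?_, ?_⟩
  · -- decreasing
    intro τ h1 h2
    rw [show n + (τ+1) = n + τ + 1 from by omega]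
    rw [cesaroEntry_eq hk (by omega) (by omega : n + τ + 1 ≤ n + l),
        cesaroEntry_eq hk (by omega) (by omega : n + τ + 1 ≤ n + L),
        cesaroEntry_eq hk (by omega) (by omega : n + τ ≤ n + l),
        cesaroEntry_eq hk (by omega) (by omega : n + τ ≤ n + L)]
    set q := k - 1 with hq
    have hX1 : 0 < Hh q (n+τ+1) (n+l) := Hh_pos (by omega) (by omega) q
    have hY1 : 0 < Hh q (n+τ+1) (n+L) := Hh_pos (by omega) (by omega) q
    have hX0 : 0 < Hh q (n+τ) (n+l) := Hh_pos (by omega) (by omega) q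
    have hY0 : 0 < Hh q (n+τ) (n+L) := Hh_pos (by omega) (by omega) q
    have J := Hh_J (m := n+τ) (by omega) (by omega : n + τ + 1 ≤ n + l)
      (by omega : n + l ≤ n + L) q q le_rfl
    -- J : Hh q (n+τ+1) (n+l) * Hh q (n+τ) (n+L) ≤ Hh q (n+τ+1) (n+L) * Hh q (n+τ) (n+l)
    rw [div_le_div_iff₀ (div_pos hY1 hb) (div_pos hY0 hb)]
    rw [div_mul_div_comm, div_mul_div_comm,
      div_le_div_iff₀ (by positivity) (by positivity)]
    nlinarith [J, mul_pos ha hb, mul_le_mul_of_nonneg_right J (le_of_lt (mul_pos ha hb))]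
  · -- bound by 2
    rw [cesaroEntry_eq hk (by omega) (by omega : n + 1 ≤ n + l),
        cesaroEntry_eq hk (by omega) (by omega : n + 1 ≤ n + L)]
    set q := k - 1 with hq
    have hX : 0 < Hh q (n+1) (n+l) := Hh_pos (by omega) (by omega) q
    have hY : 0 < Hh q (n+1) (n+L) := Hh_pos (by omega) (by omega) q
    have hXY : Hh q (n+1) (n+l) ≤ Hh q (n+1) (n+L) := Hh_mono q (n+1) (by omega)
    have hBA : ((n+L : ℕ):ℝ) ≤ 2 * ((n+l : ℕ):ℝ) := by
      push_cast
      have c1 : (L:ℝ) ≤ (n:ℝ) := by exact_mod_cast hLn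
      have c2 : (1:ℝ) ≤ (l:ℝ) := by exact_mod_cast hl
      linarith
    have key : (Hh q (n+1) (n+l) / ((n+l:ℕ):ℝ)) / (Hh q (n+1) (n+L) / ((n+L:ℕ):ℝ))
        = (Hh q (n+1) (n+l) * ((n+L:ℕ):ℝ)) / (Hh q (n+1) (n+L) * ((n+l:ℕ):ℝ)) := by
      field_simp
    rw [key, div_le_iff₀ (by positivity)]
    nlinarith [mul_le_mul_of_nonneg_right hXY (le_of_lt hb),
      mul_le_mul_of_nonneg_left hBA (le_of_lt hY)]
  · -- positivity
    intro τ h1 h2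
    rw [cesaroEntry_eq hk (by omega) (by omega : n + τ ≤ n + l),
        cesaroEntry_eq hk (by omega) (by omega : n + τ ≤ n + L)]
    exact div_pos (div_pos (Hh_pos (by omega) (by omega) _) ha)
      (div_pos (Hh_pos (by omega) (by omega) _) hb)
end

section
/- Let V be a real vector space, θ ∈ V^ℕ a sequence in V, and n, k, a ≥ 1 natural numbers. Then [T^k(θ)]_{n+a} is a convex combination of the vectors [T^k(θ)]_n, [T^{k−1}(θ)]_n, …, [T(θ)]_n, θ_{n+1}, …, θ_{n+a}; that is, there exist nonnegative real coefficients summing to 1 such that [T^k(θ)]_{n+a} equals the corresponding linear combination of these k + a vectors. -/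
noncomputable def cesaroV {V : Type*} [AddCommGroup V] [Module ℝ V] (θ : ℕ → V) : ℕ → V :=
  fun n => (n : ℝ)⁻¹ • ∑ i ∈ Finset.Icc 1 n, θ i

lemma ces_rec {V : Type*} [AddCommGroup V] [Module ℝ V] (φ : ℕ → V) (n : ℕ) (hn : 1 ≤ n) :
    cesaroV φ (n + 1) = ((n : ℝ)/(n + 1)) • cesaroV φ n + ((n : ℝ) + 1)⁻¹ • φ (n + 1) := by
  have h1 : (n : ℝ) ≠ 0 := Nat.cast_ne_zero.2 (by omega)
  have h2 : (n : ℝ) + 1 ≠ 0 := by positivity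
  unfold cesaroV
  rw [Finset.sum_Icc_succ_top (by omega : 1 ≤ n + 1), smul_add, smul_smul]
  push_cast
  congr 2
  field_simp

lemma ces_one_step {V : Type*} [AddCommGroup V] [Module ℝ V] (θ : ℕ → V) (k n : ℕ)
    (hk : 1 ≤ k) (hn : 1 ≤ n) :
    ∃ c : ℕ → ℝ, ∃ d : ℝ, (∀ i ∈ Finset.Icc 1 k, 0 ≤ c i) ∧ 0 ≤ d ∧
      ((∑ i ∈ Finset.Icc 1 k, c i) + d = 1) ∧
      cesaroV^[k] θ (n + 1) =
        (∑ i ∈ Finset.Icc 1 k, c i • cesaroV^[i] θ n) + d • θ (n + 1) := by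
  have h1 : (0:ℝ) < n := by exact_mod_cast hn
  have h2 : (0:ℝ) < (n:ℝ) + 1 := by positivity
  induction k, hk using Nat.le_induction with
  | base =>
    refine ⟨fun _ => (n : ℝ)/(n + 1), ((n : ℝ) + 1)⁻¹, ?_, by positivity, ?_, ?_⟩
    · intro i _; positivity
    · rw [Finset.Icc_self, Finset.sum_singleton]; field_simp
    · rw [Finset.Icc_self, Finset.sum_singleton]
      simpa using ces_rec θ n hn
  | succ k hk ih =>
    obtain ⟨c, d, hc, hd, hsum, heq⟩ := ih
    refine ⟨fun i => if i = k + 1 then (n : ℝ)/(n + 1) else ((n : ℝ) + 1)⁻¹ * c i,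
      ((n : ℝ) + 1)⁻¹ * d, ?_, mul_nonneg (by positivity) hd, ?_, ?_⟩
    · intro i hi
      beta_reduce
      by_cases h : i = k + 1
      · rw [if_pos h]; positivity
      · simp only [if_neg h]
        exact mul_nonneg (by positivity) (hc i (by simp at hi ⊢; omega))
    · rw [Finset.sum_Icc_succ_top (by omega : 1 ≤ k + 1), if_pos rfl]
      have : ∑ i ∈ Finset.Icc 1 k, (if i = k + 1 then (n : ℝ)/(n + 1) else ((n : ℝ) + 1)⁻¹ * c i)
          = ∑ i ∈ Finset.Icc 1 k, ((n : ℝ) + 1)⁻¹ * c i := by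
        apply Finset.sum_congr rfl
        intro i hi
        rw [if_neg (by simp at hi; omega)]
      rw [this, ← Finset.mul_sum]
      have h3 : (n : ℝ) + 1 ≠ 0 := by positivity
      field_simp
      linarith [hsum]
    · have hrec := ces_rec (cesaroV^[k] θ) n hn
      rw [← Function.iterate_succ_apply' cesaroV k θ] at hrec
      rw [hrec, heq]
      rw [Finset.sum_Icc_succ_top (by omega : 1 ≤ k + 1)]
      beta_reduce
      rw [if_pos rfl, smul_add, Finset.smul_sum]
      have hcong : ∑ i ∈ Finset.Icc 1 k,
          (if i = k + 1 then (n : ℝ)/(n + 1) else ((n : ℝ) + 1)⁻¹ * c i) • cesaroV^[i] θ n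
          = ∑ i ∈ Finset.Icc 1 k, ((n : ℝ) + 1)⁻¹ • c i • cesaroV^[i] θ n := by
        apply Finset.sum_congr rfl
        intro i hi
        rw [if_neg (by simp at hi; omega), smul_smul]
      rw [hcong, smul_smul]
      abel

lemma ces_aux {V : Type*} [AddCommGroup V] [Module ℝ V] (θ : ℕ → V) (n a : ℕ)
    (hn : 1 ≤ n) (ha : 1 ≤ a) : ∀ k, 1 ≤ k →
    ∃ c d : ℕ → ℝ,
      (∀ i ∈ Finset.Icc 1 k, 0 ≤ c i) ∧ (∀ j ∈ Finset.Icc 1 a, 0 ≤ d j) ∧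
      ((∑ i ∈ Finset.Icc 1 k, c i) + (∑ j ∈ Finset.Icc 1 a, d j) = 1) ∧
      cesaroV^[k] θ (n + a) =
        (∑ i ∈ Finset.Icc 1 k, c i • cesaroV^[i] θ n) +
          ∑ j ∈ Finset.Icc 1 a, d j • θ (n + j) := by
  induction a, ha using Nat.le_induction with
  | base =>
    intro k hk
    obtain ⟨c, d, hc, hd, hsum, heq⟩ := ces_one_step θ k n hk hn
    refine ⟨c, fun _ => d, hc, fun j _ => hd, ?_, ?_⟩
    · rw [Finset.Icc_self, Finset.sum_singleton]; exact hsum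
    · rw [Finset.Icc_self, Finset.sum_singleton]; exact heq
  | succ a ha ih =>
    intro k hk
    obtain ⟨e, f, he, hf, hef, heqe⟩ := ces_one_step θ k (n + a) hk (by omega)
    have H : ∀ i : ℕ, ∃ c d : ℕ → ℝ,
        (∀ j ∈ Finset.Icc 1 i, 0 ≤ c j) ∧ (∀ j ∈ Finset.Icc 1 a, 0 ≤ d j) ∧
        (1 ≤ i → (((∑ j ∈ Finset.Icc 1 i, c j) + ∑ j ∈ Finset.Icc 1 a, d j) = 1 ∧
          cesaroV^[i] θ (n + a) =
            (∑ j ∈ Finset.Icc 1 i, c j • cesaroV^[j] θ n) +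
              ∑ j ∈ Finset.Icc 1 a, d j • θ (n + j))) := by
      intro i
      rcases Nat.eq_zero_or_pos i with h | h
      · exact ⟨0, 0, by simp, by simp, by omega⟩
      · obtain ⟨c, d, h1, h2, h3, h4⟩ := ih i h
        exact ⟨c, d, h1, h2, fun _ => ⟨h3, h4⟩⟩
    choose C D hC hD hCD using H
    refine ⟨fun j => ∑ i ∈ Finset.Icc 1 k, e i * (if j ≤ i then C i j else 0),
      fun j => if j = a + 1 then f else ∑ i ∈ Finset.Icc 1 k, e i * D i j, ?_, ?_, ?_, ?_⟩
    · intro j hj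
      rw [Finset.mem_Icc] at hj
      apply Finset.sum_nonneg
      intro i hi
      rw [Finset.mem_Icc] at hi
      apply mul_nonneg (he i (by simp [Finset.mem_Icc]; omega))
      by_cases h : j ≤ i
      · rw [if_pos h]; exact hC i j (by rw [Finset.mem_Icc]; omega)
      · rw [if_neg h]
    · intro j hj
      rw [Finset.mem_Icc] at hj
      beta_reduce
      by_cases h : j = a + 1
      · rw [if_pos h]; exact hf
      · rw [if_neg h]
        apply Finset.sum_nonneg
        intro i hi
        rw [Finset.mem_Icc] at hi
        exact mul_nonneg (he i (by simp [Finset.mem_Icc]; omega))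
          (hD i j (by rw [Finset.mem_Icc]; omega))
    · -- coefficients sum to 1
      have hCt : ∀ i ∈ Finset.Icc 1 k,
          ∑ j ∈ Finset.Icc 1 k, (if j ≤ i then C i j else 0) = ∑ j ∈ Finset.Icc 1 i, C i j := by
        intro i hi
        rw [Finset.mem_Icc] at hi
        rw [← Finset.sum_subset (Finset.Icc_subset_Icc_right hi.2)
          (fun j hj hj2 => by
            rw [Finset.mem_Icc] at hj hj2
            rw [if_neg (by omega)])]
        exact Finset.sum_congr rfl fun j hj => by
          rw [Finset.mem_Icc] at hj; rw [if_pos hj.2]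
      rw [Finset.sum_Icc_succ_top (by omega : 1 ≤ a + 1)]
      beta_reduce
      rw [if_pos rfl]
      have hd1 : ∑ j ∈ Finset.Icc 1 a,
          (if j = a + 1 then f else ∑ i ∈ Finset.Icc 1 k, e i * D i j)
          = ∑ j ∈ Finset.Icc 1 a, ∑ i ∈ Finset.Icc 1 k, e i * D i j := by
        refine Finset.sum_congr rfl fun j hj => ?_
        rw [Finset.mem_Icc] at hj
        rw [if_neg (by omega)]
      have hc1 : ∑ j ∈ Finset.Icc 1 k, ∑ i ∈ Finset.Icc 1 k, e i * (if j ≤ i then C i j else 0)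
          = ∑ i ∈ Finset.Icc 1 k, e i * ∑ j ∈ Finset.Icc 1 i, C i j := by
        rw [Finset.sum_comm]
        refine Finset.sum_congr rfl fun i hi => ?_
        rw [← Finset.mul_sum, hCt i hi]
      have hd2 : ∑ j ∈ Finset.Icc 1 a, ∑ i ∈ Finset.Icc 1 k, e i * D i j
          = ∑ i ∈ Finset.Icc 1 k, e i * ∑ j ∈ Finset.Icc 1 a, D i j := by
        rw [Finset.sum_comm]
        exact Finset.sum_congr rfl fun i _ => (Finset.mul_sum _ _ _).symm
      rw [hd1, hc1, hd2]
      have : ∑ i ∈ Finset.Icc 1 k, e i * (∑ j ∈ Finset.Icc 1 i, C i j)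
          + ∑ i ∈ Finset.Icc 1 k, e i * (∑ j ∈ Finset.Icc 1 a, D i j)
          = ∑ i ∈ Finset.Icc 1 k, e i := by
        rw [← Finset.sum_add_distrib]
        refine Finset.sum_congr rfl fun i hi => ?_
        rw [Finset.mem_Icc] at hi
        rw [← mul_add, (hCD i hi.1).1, mul_one]
      linarith [hef, this]
    · -- vector identity
      have hkey : ∀ i ∈ Finset.Icc 1 k,
          e i • cesaroV^[i] θ (n + a)
            = (∑ j ∈ Finset.Icc 1 k, (e i * (if j ≤ i then C i j else 0)) • cesaroV^[j] θ n)
              + ∑ j ∈ Finset.Icc 1 a, (e i * D i j) • θ (n + j) := by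
        intro i hi
        rw [Finset.mem_Icc] at hi
        have h1 : ∑ j ∈ Finset.Icc 1 k, (e i * (if j ≤ i then C i j else 0)) • cesaroV^[j] θ n
            = ∑ j ∈ Finset.Icc 1 i, (e i * C i j) • cesaroV^[j] θ n := by
          rw [← Finset.sum_subset (Finset.Icc_subset_Icc_right hi.2)
            (fun j hj hj2 => by
              rw [Finset.mem_Icc] at hj hj2
              rw [if_neg (by omega), mul_zero, zero_smul])]
          exact Finset.sum_congr rfl fun j hj => by
            rw [Finset.mem_Icc] at hj; rw [if_pos hj.2]
        rw [h1, (hCD i hi.1).2, smul_add, Finset.smul_sum, Finset.smul_sum]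
        congr 1
        · exact Finset.sum_congr rfl fun j _ => smul_smul _ _ _
        · exact Finset.sum_congr rfl fun j _ => smul_smul _ _ _
      have hna : n + (a + 1) = (n + a) + 1 := by omega
      rw [hna, heqe, Finset.sum_congr rfl hkey, Finset.sum_add_distrib]
      rw [Finset.sum_Icc_succ_top (by omega : 1 ≤ a + 1)]
      beta_reduce
      rw [if_pos rfl]
      have hd1 : ∑ j ∈ Finset.Icc 1 a,
          (if j = a + 1 then f else ∑ i ∈ Finset.Icc 1 k, e i * D i j) • θ (n + j)
          = ∑ j ∈ Finset.Icc 1 a, ∑ i ∈ Finset.Icc 1 k, (e i * D i j) • θ (n + j) := by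
        refine Finset.sum_congr rfl fun j hj => ?_
        rw [Finset.mem_Icc] at hj
        rw [if_neg (by omega), Finset.sum_smul]
      have hc1 : ∑ j ∈ Finset.Icc 1 k,
          (∑ i ∈ Finset.Icc 1 k, e i * (if j ≤ i then C i j else 0)) • cesaroV^[j] θ n
          = ∑ i ∈ Finset.Icc 1 k, ∑ j ∈ Finset.Icc 1 k,
              (e i * (if j ≤ i then C i j else 0)) • cesaroV^[j] θ n := by
        rw [Finset.sum_comm]
        exact Finset.sum_congr rfl fun j _ => Finset.sum_smul
      have hd2 : ∑ j ∈ Finset.Icc 1 a, ∑ i ∈ Finset.Icc 1 k, (e i * D i j) • θ (n + j)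
          = ∑ i ∈ Finset.Icc 1 k, ∑ j ∈ Finset.Icc 1 a, (e i * D i j) • θ (n + j) :=
        Finset.sum_comm
      rw [hd1, hc1, hd2, ← hna]
      abel

/-- For `n, k, a ≥ 1`, `[T^k(θ)]_{n+a}` is a convex combination of the vectors
`[T^k(θ)]_n, [T^{k−1}(θ)]_n, …, [T(θ)]_n, θ_{n+1}, …, θ_{n+a}`. -/
theorem cesaroV_iterate_convex_combination {V : Type*} [AddCommGroup V] [Module ℝ V]
    (θ : ℕ → V) (n k a : ℕ) (hn : 1 ≤ n) (hk : 1 ≤ k) (ha : 1 ≤ a) :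
    ∃ c d : ℕ → ℝ,
      (∀ i ∈ Finset.Icc 1 k, 0 ≤ c i) ∧ (∀ j ∈ Finset.Icc 1 a, 0 ≤ d j) ∧
      ((∑ i ∈ Finset.Icc 1 k, c i) + (∑ j ∈ Finset.Icc 1 a, d j) = 1) ∧
      cesaroV^[k] θ (n + a) =
        (∑ i ∈ Finset.Icc 1 k, c i • cesaroV^[i] θ n) +
          ∑ j ∈ Finset.Icc 1 a, d j • θ (n + j) :=
  ces_aux θ n a hn ha k hk
end

section
/- Let W be a separable Fréchet space (a completely metrizable, separable, locally convex topological vector space over ℝ) and let B ⊆ W be a closed subset. Then the set Θ_{B,W} = { θ ∈ B^ℕ : for every k ≥ 1, the set { [T^k(θ)]_n : n ≥ 1 } is dense in the convex hull conv(B) } is a dense G_δ subset of B^ℕ, where B^ℕ carries the product topology. -/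
open Filter Topology

section Aux

variable {W : Type*} [AddCommGroup W] [Module ℝ W] [TopologicalSpace W]
  [IsTopologicalAddGroup W] [ContinuousSMul ℝ W]

private lemma icc_one_eq_ioc (n : ℕ) : Finset.Icc 1 n = Finset.Ioc 0 n := by
  ext i; simp [Finset.mem_Icc, Finset.mem_Ioc]; omega

private lemma tendsto_inv_smul_const (v : W) :
    Tendsto (fun n : ℕ => (n : ℝ)⁻¹ • v) atTop (𝓝 0) := by
  have h1 : Tendsto (fun n : ℕ => (n : ℝ)⁻¹) atTop (𝓝 0) :=
    tendsto_inv_atTop_zero.comp tendsto_natCast_atTop_atTop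
  have h2 := h1.smul_const v
  rwa [zero_smul] at h2

lemma continuous_cesaroV : Continuous (cesaroV (V := W)) := by
  apply continuous_pi; intro n
  exact (continuous_finset_sum _ fun i _ => continuous_apply i).const_smul _

lemma cesaro_tendsto_zero_s12 [LocallyConvexSpace ℝ W] {x : ℕ → W}
    (hx : Tendsto x atTop (𝓝 0)) : Tendsto (cesaroV x) atTop (𝓝 0) := by
  rw [Filter.tendsto_def]
  intro V hV
  obtain ⟨V₀, hV₀, hadd⟩ := exists_nhds_zero_half hV
  obtain ⟨C, ⟨hCmem, hCconv⟩, hCsub⟩ :=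
    (LocallyConvexSpace.convex_basis (𝕜 := ℝ) (0 : W)).mem_iff.1 hV₀
  have h0C : (0 : W) ∈ C := mem_of_mem_nhds hCmem
  obtain ⟨N, hN⟩ := eventually_atTop.1 (Filter.tendsto_def.1 hx C hCmem)
  obtain ⟨N₂, hN₂⟩ := eventually_atTop.1
    (Filter.tendsto_def.1 (tendsto_inv_smul_const (∑ i ∈ Finset.Icc 1 N, x i)) V₀ hV₀)
  refine mem_atTop_sets.2 ⟨max (N + 1) N₂, fun n hn => ?_⟩
  have hnN : N < n := lt_of_lt_of_le (Nat.lt_succ_self N) (le_trans (le_max_left _ _) hn)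
  have hn1 : 1 ≤ n := by omega
  have hn2 : N₂ ≤ n := le_trans (le_max_right _ _) hn
  set y : ℕ → W := fun i => if i ≤ N then 0 else x i with hy
  have hsplit : ∑ i ∈ Finset.Icc 1 n, x i =
      (∑ i ∈ Finset.Icc 1 N, x i) + ∑ i ∈ Finset.Icc 1 n, y i := by
    rw [icc_one_eq_ioc n, icc_one_eq_ioc N,
      ← Finset.sum_Ioc_consecutive _ (Nat.zero_le N) (le_of_lt hnN)]
    congr 1
    rw [← Finset.sum_Ioc_consecutive (fun i => y i) (Nat.zero_le N) (le_of_lt hnN)]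
    have h1 : ∑ i ∈ Finset.Ioc 0 N, y i = 0 :=
      Finset.sum_eq_zero fun i hi => if_pos (Finset.mem_Ioc.1 hi).2
    have h2 : ∑ i ∈ Finset.Ioc N n, y i = ∑ i ∈ Finset.Ioc N n, x i :=
      Finset.sum_congr rfl fun i hi => if_neg (by
        have := (Finset.mem_Ioc.1 hi).1; omega)
    rw [h1, h2, zero_add]
  have hyC : (n : ℝ)⁻¹ • ∑ i ∈ Finset.Icc 1 n, y i ∈ C := by
    rw [Finset.smul_sum]
    refine hCconv.sum_mem (fun i _ => by positivity) ?_ ?_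
    · rw [Finset.sum_const, Nat.card_Icc]
      have hne : (n : ℝ) ≠ 0 := by positivity
      simp only [Nat.add_sub_cancel, nsmul_eq_mul]
      field_simp
    · intro i hi
      by_cases hiN : i ≤ N
      · simpa [hy, hiN] using h0C
      · have hxC : x i ∈ C := hN i (by omega)
        simpa [hy, hiN] using hxC
  show cesaroV x n ∈ V
  unfold cesaroV
  rw [hsplit, smul_add]
  exact hadd _ (hN₂ n hn2) _ (hCsub hyC)

lemma cesaro_tendsto [LocallyConvexSpace ℝ W] {x : ℕ → W} {L : W}
    (hx : Tendsto x atTop (𝓝 L)) : Tendsto (cesaroV x) atTop (𝓝 L) := by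
  have h0 : Tendsto (fun i => x i - L) atTop (𝓝 0) := by
    simpa using hx.sub_const L
  have h1 := cesaro_tendsto_zero_s12 h0
  have heq : (fun n => cesaroV (fun i => x i - L) n + L) =ᶠ[atTop] cesaroV x := by
    filter_upwards [eventually_ge_atTop 1] with n hn
    have hne : (n : ℝ) ≠ 0 := by positivity
    unfold cesaroV
    rw [Finset.sum_sub_distrib, smul_sub, Finset.sum_const, Nat.card_Icc,
      Nat.add_sub_cancel, ← Nat.cast_smul_eq_nsmul ℝ, smul_smul, inv_mul_cancel₀ hne,
      one_smul, sub_add_cancel]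
  have h2 : Tendsto (fun n => cesaroV (fun i => x i - L) n + L) atTop (𝓝 L) := by
    simpa using h1.add_const L
  exact h2.congr' heq

lemma cesaro_iterate_tendsto [LocallyConvexSpace ℝ W] {x : ℕ → W} {L : W} (k : ℕ)
    (hx : Tendsto x atTop (𝓝 L)) : Tendsto (cesaroV^[k] x) atTop (𝓝 L) := by
  induction k with
  | zero => simpa using hx
  | succ k ih => rw [Function.iterate_succ_apply']; exact cesaro_tendsto ih

private lemma sum_range_mod {M : Type*} [AddCommMonoid M] (f : ℕ → M) {D : ℕ} (hD : 0 < D)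
    (m : ℕ) : ∑ r ∈ Finset.range m, f (r % D) =
      (m / D) • (∑ r ∈ Finset.range D, f r) + ∑ r ∈ Finset.range (m % D), f r := by
  have key : ∀ q r, r < D → ∑ i ∈ Finset.range (D * q + r), f (i % D) =
      q • (∑ i ∈ Finset.range D, f i) + ∑ i ∈ Finset.range r, f i := by
    intro q
    induction q with
    | zero =>
      intro r hr
      simp only [Nat.mul_zero, Nat.zero_add, zero_smul, zero_add]
      exact Finset.sum_congr rfl fun i hi => by
        rw [Nat.mod_eq_of_lt (lt_of_lt_of_le (Finset.mem_range.1 hi) (le_of_lt hr))]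
    | succ q ih =>
      intro r hr
      have hm : D * (q + 1) + r = D + (D * q + r) := by ring
      rw [hm, Finset.sum_range_add]
      have h1 : ∑ i ∈ Finset.range D, f (i % D) = ∑ i ∈ Finset.range D, f i :=
        Finset.sum_congr rfl fun i hi => by rw [Nat.mod_eq_of_lt (Finset.mem_range.1 hi)]
      have h2 : ∑ i ∈ Finset.range (D * q + r), f ((D + i) % D) =
          ∑ i ∈ Finset.range (D * q + r), f (i % D) :=
        Finset.sum_congr rfl fun i _ => by rw [Nat.add_mod_left]
      rw [h1, h2, ih r hr, succ_nsmul]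
      abel
  have h := key (m / D) (m % D) (Nat.mod_lt _ hD)
  rwa [Nat.div_add_mod m D] at h

private lemma sum_range_getD {M : Type*} [AddCommMonoid M] (l : List M) :
    ∑ r ∈ Finset.range l.length, l.getD r 0 = l.sum := by
  induction l with
  | nil => simp
  | cons a l ih =>
    rw [List.length_cons, Finset.sum_range_succ', List.sum_cons]
    simp only [List.getD_cons_succ, List.getD_cons_zero]
    rw [ih, add_comm]

/-- Cesàro means of an eventually-periodic sequence converge to the average over a period. -/
lemma tendsto_cesaro_periodic {g : ℕ → W} {D N : ℕ} (hD : 0 < D) (ψ : ℕ → W)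
    (hψ : ∀ i, N < i → ψ i = g ((i - N - 1) % D)) :
    Tendsto (cesaroV ψ) atTop (𝓝 ((D : ℝ)⁻¹ • ∑ r ∈ Finset.range D, g r)) := by
  set Sg := ∑ r ∈ Finset.range D, g r with hSg
  set w' := (D : ℝ)⁻¹ • Sg with hw'
  set v := ∑ i ∈ Finset.Icc 1 N, ψ i with hv
  set p : ℕ → W := fun r => ∑ r' ∈ Finset.range r, g r' with hp
  have hDne : (D : ℝ) ≠ 0 := by positivity
  have hSw : Sg = (D : ℝ) • w' := by
    rw [hw', smul_smul, mul_inv_cancel₀ hDne, one_smul]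
  have hdec : ∀ n, N ≤ n → ∑ i ∈ Finset.Icc 1 n, ψ i =
      v + ((n - N) / D) • Sg + p ((n - N) % D) := by
    intro n hn
    rw [icc_one_eq_ioc n, ← Finset.sum_Ioc_consecutive _ (Nat.zero_le N) hn]
    have hIoc : Finset.Ioc N n = Finset.Ico (N + 1) (n + 1) := by
      ext i; simp [Finset.mem_Ioc, Finset.mem_Ico]
    have h2 : ∑ i ∈ Finset.Ioc N n, ψ i = ∑ r ∈ Finset.range (n - N), g (r % D) := by
      rw [hIoc, Finset.sum_Ico_eq_sum_range]
      have hlen : n + 1 - (N + 1) = n - N := by omega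
      rw [hlen]
      refine Finset.sum_congr rfl fun r _ => ?_
      rw [hψ (N + 1 + r) (by omega)]
      have he : N + 1 + r - N - 1 = r := by omega
      rw [he]
    rw [h2, sum_range_mod g hD, ← icc_one_eq_ioc, ← hv, add_assoc]
  have hA : Tendsto (fun n : ℕ => (n : ℝ)⁻¹ • v) atTop (𝓝 0) := tendsto_inv_smul_const v
  set s : ℕ → ℝ := fun n => (n : ℝ)⁻¹ * ((((n - N) / D : ℕ) : ℝ) * (D : ℝ)) with hs
  have hq : Tendsto (fun n : ℕ => ((N + (n - N) % D : ℕ) : ℝ) / (n : ℝ)) atTop (𝓝 0) := by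
    refine tendsto_of_tendsto_of_tendsto_of_le_of_le' tendsto_const_nhds
      (tendsto_const_div_atTop_nhds_zero_nat ((N : ℝ) + (D : ℝ))) ?_ ?_
    · filter_upwards with n
      positivity
    · filter_upwards with n
      have h2 : (N + (n - N) % D : ℕ) ≤ N + D := by
        have := Nat.mod_lt (n - N) hD; omega
      have h1 : ((N + (n - N) % D : ℕ) : ℝ) ≤ (N : ℝ) + (D : ℝ) := by
        push_cast
        exact_mod_cast h2
      exact div_le_div_of_nonneg_right h1 (Nat.cast_nonneg n)
  have hs1 : Tendsto s atTop (𝓝 1) := by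
    have heq : (fun n : ℕ => 1 - ((N + (n - N) % D : ℕ) : ℝ) / (n : ℝ)) =ᶠ[atTop] s := by
      filter_upwards [eventually_ge_atTop (N + 1)] with n hn
      have hnN : N ≤ n := by omega
      have hn0 : (n : ℝ) ≠ 0 := by
        have : 0 < n := by omega
        positivity
      have hmle : (n - N) % D ≤ n - N := Nat.mod_le _ _
      have hdm : (n - N) / D * D = (n - N) - (n - N) % D := by
        have h := Nat.div_add_mod (n - N) D
        rw [Nat.mul_comm] at h
        omega
      have e1 : (((n - N) / D : ℕ) : ℝ) * (D : ℝ) =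
          ((n : ℝ) - (N : ℝ)) - (((n - N) % D : ℕ) : ℝ) := by
        have h' : ((((n - N) / D * D : ℕ)) : ℝ) = (((n - N) - (n - N) % D : ℕ) : ℝ) := by
          rw [hdm]
        push_cast [hmle, hnN] at h'
        exact_mod_cast h'
      rw [hs]
      simp only
      rw [e1]
      push_cast
      field_simp
      ring
    have h2 : Tendsto (fun n : ℕ => 1 - ((N + (n - N) % D : ℕ) : ℝ) / (n : ℝ)) atTop
        (𝓝 (1 - 0)) := tendsto_const_nhds.sub hq
    rw [sub_zero] at h2
    exact h2.congr' heq
  have hBt : Tendsto (fun n : ℕ => s n • w') atTop (𝓝 w') := by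
    have := hs1.smul_const w'
    rwa [one_smul] at this
  have hC : Tendsto (fun n : ℕ => (n : ℝ)⁻¹ • p ((n - N) % D)) atTop (𝓝 0) := by
    rw [Filter.tendsto_def]
    intro V hV
    have h2 : ∀ᶠ n : ℕ in atTop, ∀ r ∈ Finset.range D, (n : ℝ)⁻¹ • p r ∈ V :=
      (eventually_all_finset _).2 fun r _ =>
        Filter.tendsto_def.1 (tendsto_inv_smul_const (p r)) V hV
    filter_upwards [h2] with n hn
    exact hn _ (Finset.mem_range.2 (Nat.mod_lt _ hD))
  have htot : Tendsto
      (fun n : ℕ => (n : ℝ)⁻¹ • v + s n • w' + (n : ℝ)⁻¹ • p ((n - N) % D)) atTop (𝓝 w') := by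
    have h := (hA.add hBt).add hC
    rwa [zero_add, add_zero] at h
  refine htot.congr' ?_
  filter_upwards [eventually_ge_atTop (N + 1)] with n hn
  have hnN : N ≤ n := by omega
  show (n : ℝ)⁻¹ • v + s n • w' + (n : ℝ)⁻¹ • p ((n - N) % D) = cesaroV ψ n
  have hces : cesaroV ψ n = (n : ℝ)⁻¹ • ∑ i ∈ Finset.Icc 1 n, ψ i := rfl
  rw [hces, hdec n hnN, smul_add, smul_add]
  have hmid : (n : ℝ)⁻¹ • ((((n - N) / D)) • Sg) = s n • w' := by
    rw [← Nat.cast_smul_eq_nsmul ℝ, hSw, smul_smul, smul_smul]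
    congr 1
    simp only [hs]
    ring
  rw [hmid]

/-- Rational approximation of a convex combination inside an open set. -/
lemma exists_nat_weights {ι : Type*} {U : Set W} (hU : IsOpen U) (t : Finset ι)
    (lam : ι → ℝ) (z : ι → W) (hlam0 : ∀ i ∈ t, 0 ≤ lam i) (hlam1 : ∑ i ∈ t, lam i = 1)
    (hw : (∑ i ∈ t, lam i • z i) ∈ U) :
    ∃ D : ℕ, 0 < D ∧ ∃ a : ι → ℕ, ∑ i ∈ t, a i = D ∧
      (D : ℝ)⁻¹ • (∑ i ∈ t, (a i : ℝ) • z i) ∈ U := by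
  classical
  have htne : t.Nonempty := by
    rcases Finset.eq_empty_or_nonempty t with h | h
    · rw [h] at hlam1; simp at hlam1
    · exact h
  obtain ⟨i₀, hi₀⟩ := htne
  set S : ℕ → ℕ := fun D => ∑ j ∈ t.erase i₀, ⌊lam j * D⌋₊ with hS
  have herase : ∑ j ∈ t.erase i₀, lam j + lam i₀ = 1 := by
    rw [Finset.sum_erase_add t lam hi₀]; exact hlam1
  have heraseLe : ∑ j ∈ t.erase i₀, lam j ≤ 1 := by
    have := hlam0 i₀ hi₀; linarith
  have hSleR : ∀ D : ℕ, (S D : ℝ) ≤ (D : ℝ) := by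
    intro D
    rw [hS]
    push_cast
    calc ∑ j ∈ t.erase i₀, (⌊lam j * D⌋₊ : ℝ)
        ≤ ∑ j ∈ t.erase i₀, lam j * D := by
          refine Finset.sum_le_sum fun j hj => ?_
          exact Nat.floor_le (mul_nonneg (hlam0 j (Finset.mem_of_mem_erase hj))
            (Nat.cast_nonneg D))
      _ = (∑ j ∈ t.erase i₀, lam j) * D := by rw [← Finset.sum_mul]
      _ ≤ 1 * (D : ℝ) := mul_le_mul_of_nonneg_right heraseLe (Nat.cast_nonneg D)
      _ = (D : ℝ) := one_mul _
  have hSle : ∀ D : ℕ, S D ≤ D := fun D => by exact_mod_cast hSleR D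
  set a : ℕ → ι → ℕ := fun D i => if i = i₀ then D - S D else ⌊lam i * D⌋₊ with ha
  have hsum : ∀ D : ℕ, ∑ i ∈ t, a D i = D := by
    intro D
    rw [← Finset.sum_erase_add t _ hi₀]
    have h1 : ∑ i ∈ t.erase i₀, a D i = S D := by
      show _ = ∑ j ∈ t.erase i₀, ⌊lam j * (D : ℝ)⌋₊
      exact Finset.sum_congr rfl fun i hi => by
        simp only [ha, if_neg (Finset.ne_of_mem_erase hi)]
    rw [h1]
    have h2 : a D i₀ = D - S D := by simp only [ha, if_pos rfl]
    rw [h2]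
    have := hSle D
    omega
  -- convergence of the floor ratios
  have hfloor : ∀ j ∈ t.erase i₀,
      Tendsto (fun D : ℕ => (⌊lam j * (D : ℝ)⌋₊ : ℝ) / (D : ℝ)) atTop (𝓝 (lam j)) := by
    intro j hj
    have h0 : 0 ≤ lam j := hlam0 j (Finset.mem_of_mem_erase hj)
    have h := (tendsto_nat_floor_mul_div_atTop (R := ℝ) h0).comp
      (tendsto_natCast_atTop_atTop (R := ℝ))
    exact h
  have hti : ∀ i ∈ t, Tendsto (fun D : ℕ => (a D i : ℝ) / (D : ℝ)) atTop (𝓝 (lam i)) := by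
    intro i hi
    by_cases hii : i = i₀
    · subst hii
      have h1 : Tendsto (fun D : ℕ => ∑ j ∈ t.erase i, (⌊lam j * (D : ℝ)⌋₊ : ℝ) / (D : ℝ))
          atTop (𝓝 (∑ j ∈ t.erase i, lam j)) :=
        tendsto_finset_sum _ fun j hj => hfloor j hj
      have h2 : Tendsto (fun D : ℕ => 1 - ∑ j ∈ t.erase i, (⌊lam j * (D : ℝ)⌋₊ : ℝ) / (D : ℝ))
          atTop (𝓝 (1 - ∑ j ∈ t.erase i, lam j)) := tendsto_const_nhds.sub h1
      have hlim : 1 - ∑ j ∈ t.erase i, lam j = lam i := by linarith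
      rw [hlim] at h2
      refine h2.congr' ?_
      filter_upwards [eventually_ge_atTop 1] with D hD
      have hDpos : (0 : ℝ) < (D : ℝ) := by
        have : 0 < D := hD
        exact_mod_cast this
      have h4 : (a D i : ℝ) = (D : ℝ) - (S D : ℝ) := by
        have h5 : a D i = D - S D := by simp only [ha, if_pos rfl]
        rw [h5, Nat.cast_sub (hSle D)]
      have h6 : ((S D : ℕ) : ℝ) = ∑ j ∈ t.erase i, (⌊lam j * (D : ℝ)⌋₊ : ℝ) := by
        have h7 : S D = ∑ j ∈ t.erase i, ⌊lam j * (D : ℝ)⌋₊ := rfl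
        rw [h7]
        push_cast
        rfl
      rw [h4, h6, ← Finset.sum_div]
      field_simp
      simp only [mul_comm]
    · have h := hfloor i (Finset.mem_erase.2 ⟨hii, hi⟩)
      refine h.congr fun D => ?_
      simp only [ha, if_neg hii]
  have hconv : Tendsto (fun D : ℕ => ∑ i ∈ t, ((a D i : ℝ) / (D : ℝ)) • z i) atTop
      (𝓝 (∑ i ∈ t, lam i • z i)) :=
    tendsto_finset_sum _ fun i hi => (hti i hi).smul_const (z i)
  have hev : ∀ᶠ D : ℕ in atTop, (∑ i ∈ t, ((a D i : ℝ) / (D : ℝ)) • z i) ∈ U :=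
    Filter.tendsto_def.1 hconv U (hU.mem_nhds hw)
  obtain ⟨D, hD1, hDU⟩ := ((eventually_ge_atTop 1).and hev).exists
  refine ⟨D, hD1, a D, hsum D, ?_⟩
  have heq : (D : ℝ)⁻¹ • (∑ i ∈ t, (a D i : ℝ) • z i) =
      ∑ i ∈ t, ((a D i : ℝ) / (D : ℝ)) • z i := by
    rw [Finset.smul_sum]
    refine Finset.sum_congr rfl fun i _ => ?_
    rw [smul_smul, div_eq_inv_mul]
  rw [heq]
  exact hDU

/-- Build a periodic block of length `D` with prescribed multiplicities. -/
lemma exists_block {ι : Type*} (B : Set W) (t : Finset ι) (a : ι → ℕ) (z : ι → W)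
    (hz : ∀ i ∈ t, z i ∈ B) {D : ℕ} (haD : ∑ i ∈ t, a i = D) :
    ∃ g : ℕ → W, (∀ r, r < D → g r ∈ B) ∧
      ∑ r ∈ Finset.range D, g r = ∑ i ∈ t, (a i : ℝ) • z i := by
  classical
  set L : List W := t.toList.flatMap (fun i => List.replicate (a i) (z i)) with hL
  have hlen : L.length = D := by
    rw [hL, List.length_flatMap]
    have h1 : List.map (List.length ∘ fun i => List.replicate (a i) (z i)) t.toList =
        List.map (fun i => a i) t.toList := by
      refine List.map_congr_left fun i _ => ?_
      simp
    rw [h1, Finset.sum_map_toList] at *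
    · simpa using haD
  have hmem : ∀ x ∈ L, x ∈ B := by
    intro x hx
    rw [hL, List.mem_flatMap] at hx
    obtain ⟨i, hit, hxi⟩ := hx
    rw [List.eq_of_mem_replicate hxi]
    exact hz i (Finset.mem_toList.1 hit)
  refine ⟨fun r => L.getD r 0, ?_, ?_⟩
  · intro r hr
    show L.getD r 0 ∈ B
    rw [List.getD_eq_getElem _ _ (by rw [hlen]; exact hr)]
    exact hmem _ (List.getElem_mem _)
  · have h1 : ∑ r ∈ Finset.range D, L.getD r 0 = L.sum := by
      rw [← hlen]; exact sum_range_getD L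
    rw [h1, hL]
    have h2 : (t.toList.flatMap fun i => List.replicate (a i) (z i)).sum =
        (t.toList.map fun i => (List.replicate (a i) (z i)).sum).sum := by
      rw [List.flatMap, List.sum_flatten, List.map_map]
      rfl
    rw [h2]
    have h3 : (t.toList.map fun i => (List.replicate (a i) (z i)).sum) =
        t.toList.map fun i => a i • z i := by
      refine List.map_congr_left fun i _ => ?_
      rw [List.sum_replicate]
    rw [h3, Finset.sum_map_toList]
    exact Finset.sum_congr rfl fun i _ => (Nat.cast_smul_eq_nsmul ℝ _ _).symm

/-- Density of the basic open sets of the generic set. -/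
lemma dense_cesaro_hits [LocallyConvexSpace ℝ W] (B : Set W) {k : ℕ} (hk : 1 ≤ k)
    {U : Set W} (hU : IsOpen U) (hne : (U ∩ convexHull ℝ B).Nonempty) :
    Dense {θ : ℕ → B | ∃ n, 1 ≤ n ∧ cesaroV^[k] (fun i => (θ i : W)) n ∈ U} := by
  classical
  rw [dense_iff_inter_open]
  rintro V hV ⟨θ, hθV⟩
  obtain ⟨I, u, hu, hsub⟩ := isOpen_pi_iff.1 hV θ hθV
  obtain ⟨w, hwU, hwB⟩ := hne
  rw [convexHull_eq] at hwB
  obtain ⟨ι, t, lam, z, hlam0, hlam1, hzB, hwz⟩ := hwB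
  rw [Finset.centerMass_eq_of_sum_1 _ _ hlam1] at hwz
  rw [← hwz] at hwU
  obtain ⟨D, hD, a, haD, hUmem⟩ := exists_nat_weights hU t lam z hlam0 hlam1 hwU
  obtain ⟨g, hgB, hgsum⟩ := exists_block B t a z hzB haD
  set N : ℕ := I.sup id + 1 with hN
  set θ' : ℕ → B := fun i => if h : i < N then θ i
    else ⟨g ((i - N) % D), hgB _ (Nat.mod_lt _ hD)⟩ with hθ'
  set ψ : ℕ → W := fun i => (θ' i : W) with hψdef
  have hψ : ∀ i, N - 1 < i → ψ i = g ((i - (N - 1) - 1) % D) := by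
    intro i hi
    have hiN : ¬ i < N := by omega
    have he : i - (N - 1) - 1 = i - N := by omega
    rw [he]
    simp only [hψdef, hθ', dif_neg hiN]
  have htend : Tendsto (cesaroV ψ) atTop (𝓝 ((D : ℝ)⁻¹ • ∑ r ∈ Finset.range D, g r)) :=
    tendsto_cesaro_periodic hD ψ hψ
  have hwU' : (D : ℝ)⁻¹ • ∑ r ∈ Finset.range D, g r ∈ U := by
    rw [hgsum]
    exact hUmem
  obtain ⟨k', rfl⟩ : ∃ k', k = k' + 1 := ⟨k - 1, by omega⟩
  have htendk : Tendsto (cesaroV^[k' + 1] ψ) atTop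
      (𝓝 ((D : ℝ)⁻¹ • ∑ r ∈ Finset.range D, g r)) := by
    have hiter : cesaroV^[k' + 1] ψ = cesaroV^[k'] (cesaroV ψ) :=
      Function.iterate_succ_apply cesaroV k' ψ
    rw [hiter]
    exact cesaro_iterate_tendsto k' htend
  have hev : ∀ᶠ n : ℕ in atTop, cesaroV^[k' + 1] ψ n ∈ U :=
    Filter.tendsto_def.1 htendk U (hU.mem_nhds hwU')
  obtain ⟨n, hn1, hnU⟩ := ((eventually_ge_atTop 1).and hev).exists
  refine ⟨θ', ?_, ⟨n, hn1, hnU⟩⟩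
  refine hsub fun i hi => ?_
  have hiN : i < N := by
    have h1 : i ≤ I.sup id := Finset.le_sup (f := id) hi
    omega
  simp only [hθ', dif_pos hiN]
  exact (hu i hi).2

end Aux

/-- Theorem 3.2: if `W` is a separable Fréchet space (completely metrizable and separable,
i.e. Polish, locally convex topological vector space over `ℝ`) and `B ⊆ W` is closed, then
the set of sequences `θ ∈ B^ℕ` such that, for every `k ≥ 1`, `([T^k(θ)]_n)_{n≥1}` is dense
in `conv(B)`, is a dense `G_δ` subset of `B^ℕ` with the product topology. -/
theorem cesaro_generic_dense_closed (W : Type*) [AddCommGroup W] [Module ℝ W]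
    [TopologicalSpace W] [IsTopologicalAddGroup W] [ContinuousSMul ℝ W]
    [LocallyConvexSpace ℝ W] [PolishSpace W]
    (B : Set W) (hB : IsClosed B) :
    Dense {θ : ℕ → B | ∀ k, 1 ≤ k →
        convexHull ℝ B ⊆
          closure {x : W | ∃ n, 1 ≤ n ∧ x = cesaroV^[k] (fun i => (θ i : W)) n}} ∧
    IsGδ {θ : ℕ → B | ∀ k, 1 ≤ k →
        convexHull ℝ B ⊆
          closure {x : W | ∃ n, 1 ≤ n ∧ x = cesaroV^[k] (fun i => (θ i : W)) n}} := by
  classical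
  haveI : PolishSpace (↑B) := hB.polishSpace
  haveI hBaire : BaireSpace (ℕ → (↑B : Type _)) := by
    letI := TopologicalSpace.upgradeIsCompletelyMetrizable (ℕ → (↑B : Type _))
    infer_instance
  obtain ⟨S, hSc, -, hSb⟩ := TopologicalSpace.exists_countable_basis W
  set O : ℕ → Set W → Set (ℕ → B) := fun k U =>
    {θ : ℕ → B | ∃ n, 1 ≤ n ∧ cesaroV^[k] (fun i => (θ i : W)) n ∈ U} with hO
  set T : Set (ℕ × Set W) := {p | 1 ≤ p.1 ∧ p.2 ∈ S ∧ (p.2 ∩ convexHull ℝ B).Nonempty} with hT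
  have hTc : T.Countable := by
    have h1 : T ⊆ (Set.univ : Set ℕ) ×ˢ S := fun p hp => ⟨trivial, hp.2.1⟩
    exact (Set.Countable.prod Set.countable_univ hSc).mono h1
  have hOopen : ∀ p : ℕ × Set W, p ∈ T → IsOpen (O p.1 p.2) := by
    rintro ⟨k, U⟩ ⟨hk, hUS, hUne⟩
    have hU : IsOpen U := hSb.isOpen hUS
    have hrep : O k U = ⋃ n : ℕ, ⋃ _ : 1 ≤ n,
        (fun θ : ℕ → B => cesaroV^[k] (fun i => (θ i : W)) n) ⁻¹' U := by
      ext θ; simp [hO]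
    rw [hrep]
    refine isOpen_iUnion fun n => isOpen_iUnion fun _ => ?_
    have hcont : Continuous fun θ : ℕ → B => cesaroV^[k] (fun i => (θ i : W)) n := by
      refine (continuous_apply n).comp ((continuous_cesaroV.iterate k).comp ?_)
      exact continuous_pi fun i => continuous_subtype_val.comp (continuous_apply i)
    exact hU.preimage hcont
  have hOdense : ∀ p : ℕ × Set W, p ∈ T → Dense (O p.1 p.2) := by
    rintro ⟨k, U⟩ ⟨hk, hUS, hUne⟩
    exact dense_cesaro_hits B hk (hSb.isOpen hUS) hUne
  have hrep : {θ : ℕ → B | ∀ k, 1 ≤ k → convexHull ℝ B ⊆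
      closure {x : W | ∃ n, 1 ≤ n ∧ x = cesaroV^[k] (fun i => (θ i : W)) n}} =
      ⋂ p ∈ T, O p.1 p.2 := by
    ext θ
    simp only [Set.mem_setOf_eq, Set.mem_iInter]
    constructor
    · rintro hθ ⟨k, U⟩ ⟨hk, hUS, w, hwU, hwB⟩
      have hw : w ∈ closure {x : W | ∃ n, 1 ≤ n ∧ x = cesaroV^[k] (fun i => (θ i : W)) n} :=
        hθ k hk hwB
      obtain ⟨x, hxU, n, hn, hxe⟩ := mem_closure_iff.1 hw U (hSb.isOpen hUS) hwU
      exact ⟨n, hn, hxe ▸ hxU⟩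
    · intro hθ k hk x hx
      rw [mem_closure_iff]
      intro o ho hxo
      obtain ⟨U, hUS, hxU, hUo⟩ := hSb.exists_subset_of_mem_open hxo ho
      obtain ⟨n, hn, hnU⟩ := hθ (k, U) ⟨hk, hUS, ⟨x, hxU, hx⟩⟩
      exact ⟨cesaroV^[k] (fun i => (θ i : W)) n, hUo hnU, n, hn, rfl⟩
  rw [hrep]
  constructor
  · exact dense_biInter_of_isOpen hOopen hTc hOdense
  · exact IsGδ.biInter hTc fun p hp => (hOopen p hp).isGδ
end

section
/- Let V be a separable, metrizable, locally convex topological vector space over ℝ and let A ⊆ V be an arbitrary subset. Then the set Θ_{A,V} = { θ ∈ A^ℕ : for every k ≥ 1, the set { [T^k(θ)]_n : n ≥ 1 } is dense in the convex hull conv(A) } is a dense G_δ subset of A^ℕ, where A^ℕ carries the product topology. -/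
set_option linter.unusedSectionVars false
set_option maxHeartbeats 1000000

open Filter Topology Finset

section Aux

variable {V : Type*} [AddCommGroup V] [Module ℝ V] [TopologicalSpace V]
  [IsTopologicalAddGroup V] [ContinuousSMul ℝ V]

/-- For `k ≥ 1` the value `cesaroV^[k] θ m` depends only on `θ` on `[1, m]`. -/
lemma cesaroV_iterate_congr {θ₁ θ₂ : ℕ → V} {n : ℕ}
    (h : ∀ i, 1 ≤ i → i ≤ n → θ₁ i = θ₂ i) :
    ∀ k, 1 ≤ k → ∀ m, m ≤ n → cesaroV^[k] θ₁ m = cesaroV^[k] θ₂ m := by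
  intro k hk
  induction k with
  | zero => omega
  | succ k ih =>
    intro m hm
    rcases Nat.eq_zero_or_pos k with hk0 | hk0
    · subst hk0
      show cesaroV θ₁ m = cesaroV θ₂ m
      simp only [cesaroV]
      congr 1
      exact Finset.sum_congr rfl fun i hi => by
        rw [Finset.mem_Icc] at hi; exact h i hi.1 (hi.2.trans hm)
    · rw [Function.iterate_succ_apply', Function.iterate_succ_apply']
      simp only [cesaroV]
      congr 1
      exact Finset.sum_congr rfl fun i hi => by
        rw [Finset.mem_Icc] at hi; exact ih hk0 i (hi.2.trans hm)

lemma continuous_cesaroV_iterate (k : ℕ) :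
    ∀ n : ℕ, Continuous fun θ : ℕ → V => cesaroV^[k] θ n := by
  induction k with
  | zero => intro n; simpa using continuous_apply n
  | succ k ih =>
    intro n
    have : (fun θ : ℕ → V => cesaroV^[k + 1] θ n)
        = fun θ : ℕ → V => (n : ℝ)⁻¹ • ∑ i ∈ Finset.Icc 1 n, cesaroV^[k] θ i := by
      funext θ; rw [Function.iterate_succ_apply']; rfl
    rw [this]
    exact (continuous_finset_sum _ fun i _ => ih i).const_smul _

lemma cesaroV_sub_const (x : ℕ → V) (y : V) {n : ℕ} (hn : 1 ≤ n) :
    cesaroV x n - y = (n : ℝ)⁻¹ • ∑ i ∈ Finset.Icc 1 n, (x i - y) := by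
  have hcard : (Finset.Icc 1 n).card = n := by rw [Nat.card_Icc]; omega
  have hn0 : (n : ℝ) ≠ 0 := by positivity
  rw [Finset.sum_sub_distrib, Finset.sum_const, hcard, smul_sub, ← Nat.cast_smul_eq_nsmul ℝ,
    smul_smul, inv_mul_cancel₀ hn0, one_smul]
  rfl

variable [LocallyConvexSpace ℝ V]

/-- Cesàro convergence theorem in a locally convex space. -/
lemma tendsto_cesaroV {x : ℕ → V} {y : V} (hx : Tendsto x atTop (𝓝 y)) :
    Tendsto (cesaroV x) atTop (𝓝 y) := by
  have hsub : Tendsto (fun n => cesaroV x n - y) atTop (𝓝 0) →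
      Tendsto (cesaroV x) atTop (𝓝 y) := by
    intro h
    have := h.add_const y
    simpa using this
  apply hsub
  rw [Filter.tendsto_def]
  intro U hU
  obtain ⟨W₀, hW₀, hW₀U⟩ := exists_nhds_zero_half hU
  obtain ⟨W, ⟨hW, hWc⟩, hWsub⟩ := (LocallyConvexSpace.convex_basis_zero ℝ V).mem_iff.mp hW₀
  have h0W : (0 : V) ∈ W := mem_of_mem_nhds hW
  have hx' : Tendsto (fun i => x i - y) atTop (𝓝 0) := by
    have := hx.sub_const y
    simpa using this
  obtain ⟨m₀, hm₀⟩ := (Filter.eventually_atTop).mp (hx'.eventually_mem hW)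
  set v : V := ∑ i ∈ Finset.Icc 1 m₀, (x i - y) with hv_def
  have hv : Tendsto (fun n : ℕ => (n : ℝ)⁻¹ • v) atTop (𝓝 0) := by
    have h1 : Tendsto (fun n : ℕ => ((n : ℝ))⁻¹) atTop (𝓝 0) :=
      tendsto_inv_atTop_zero.comp tendsto_natCast_atTop_atTop
    simpa using h1.smul_const v
  filter_upwards [hv.eventually_mem hW₀, eventually_ge_atTop (m₀ + 1)] with n h1 h2
  have hn1 : 1 ≤ n := by omega
  have hn0 : (n : ℝ) ≠ 0 := by positivity
  set z : ℕ → V := fun i => if i ≤ m₀ then 0 else x i - y with hz_def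
  have hsplit : ∑ i ∈ Finset.Icc 1 n, (x i - y) = v + ∑ i ∈ Finset.Icc 1 n, z i := by
    have : ∑ i ∈ Finset.Icc 1 n, z i
        = ∑ i ∈ Finset.Icc 1 n, ((x i - y) - (if i ≤ m₀ then x i - y else 0)) := by
      refine Finset.sum_congr rfl fun i _ => ?_
      by_cases h : i ≤ m₀ <;> simp [hz_def, h]
    have hsub2 : ∑ i ∈ Finset.Icc 1 n, (if i ≤ m₀ then x i - y else 0) = v := by
      rw [hv_def]
      rw [← Finset.sum_subset (Finset.Icc_subset_Icc_right (by omega : m₀ ≤ n))]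
      · refine Finset.sum_congr rfl fun i hi => ?_
        rw [Finset.mem_Icc] at hi
        simp [hi.2]
      · intro i hi hni
        rw [Finset.mem_Icc] at hi hni
        have : ¬ i ≤ m₀ := by omega
        simp [this]
    have h3 : ∑ i ∈ Finset.Icc 1 n, z i = (∑ i ∈ Finset.Icc 1 n, (x i - y)) - v := by
      rw [this, Finset.sum_sub_distrib, hsub2]
    rw [h3]; abel
  have hkey : cesaroV x n - y = (n : ℝ)⁻¹ • v + ∑ i ∈ Finset.Icc 1 n, (n : ℝ)⁻¹ • z i := by
    rw [cesaroV_sub_const x y hn1, hsplit, smul_add]; simp only [Finset.smul_sum]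
  simp only [Set.mem_preimage]
  rw [hkey]
  have hmem2 : ∑ i ∈ Finset.Icc 1 n, (n : ℝ)⁻¹ • z i ∈ W := by
    apply hWc.sum_mem
    · intro i _; positivity
    · rw [Finset.sum_const, Nat.card_Icc]
      simp only [Nat.add_sub_cancel, nsmul_eq_mul]
      field_simp
    · intro i hi
      rw [Finset.mem_Icc] at hi
      by_cases h : i ≤ m₀
      · simpa [hz_def, h] using h0W
      · simp only [hz_def, h, if_false]
        exact hm₀ i (by omega)
  exact hW₀U _ h1 _ (hWsub hmem2)

/-- Cesàro means of an eventually periodic sequence tend to the cycle average. -/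
lemma tendsto_cesaroV_block (p g : ℕ → V) (N ℓ : ℕ) (hℓ : 1 ≤ ℓ) (y : V)
    (hy : (ℓ : ℝ) • y = ∑ j ∈ Finset.range ℓ, g (j % ℓ)) :
    Tendsto (cesaroV (fun i => if i ≤ N then p i else g ((i - N - 1) % ℓ)))
      atTop (𝓝 y) := by
  set θ : ℕ → V := fun i => if i ≤ N then p i else g ((i - N - 1) % ℓ) with hθ
  set S : ℕ → V := fun m => ∑ j ∈ Finset.range m, g (j % ℓ) with hS
  have hstep : ∀ m, S (ℓ + m) = (ℓ : ℝ) • y + S m := by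
    intro m
    rw [hS]
    simp only
    rw [Finset.sum_range_add]
    congr 1
    · exact hy.symm
    · exact Finset.sum_congr rfl fun i _ => by rw [Nat.add_mod_left]
  have hmul : ∀ q t, S (q * ℓ + t) = ((q * ℓ : ℕ) : ℝ) • y + S t := by
    intro q
    induction q with
    | zero => intro t; simp
    | succ q ih =>
      intro t
      have h1 : (q + 1) * ℓ + t = ℓ + (q * ℓ + t) := by ring
      rw [h1, hstep, ih]
      have : (((q + 1) * ℓ : ℕ) : ℝ) = (ℓ : ℝ) + ((q * ℓ : ℕ) : ℝ) := by push_cast; ring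
      rw [this, add_smul]
      abel
  set P : V := ∑ i ∈ Finset.Icc 1 N, p i with hP
  set w : ℕ → V := fun t => P + S t - ((N + t : ℕ) : ℝ) • y with hw
  have key : ∀ n, N + 1 ≤ n → cesaroV θ n - y = (n : ℝ)⁻¹ • w ((n - N) % ℓ) := by
    intro n hn
    have hn1 : 1 ≤ n := by omega
    have hsum : ∑ i ∈ Finset.Icc 1 n, θ i = P + S (n - N) := by
      have hIcc : Finset.Icc 1 n = Finset.Ioc 0 n := by
        ext i; simp [Nat.lt_iff_add_one_le]
      have hIccN : Finset.Icc 1 N = Finset.Ioc 0 N := by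
        ext i; simp [Nat.lt_iff_add_one_le]
      rw [hIcc, ← Finset.sum_Ioc_consecutive _ (Nat.zero_le N) (by omega : N ≤ n)]
      congr 1
      · rw [← hIccN, hP]
        refine Finset.sum_congr rfl fun i hi => ?_
        rw [Finset.mem_Icc] at hi
        simp [hθ, hi.2]
      · have hIoc : Finset.Ioc N n = Finset.Ico (N + 1) (n + 1) := by
          ext i; simp
        rw [hIoc, Finset.sum_Ico_eq_sum_range]
        have hlen : n + 1 - (N + 1) = n - N := by omega
        rw [hlen, hS]
        refine Finset.sum_congr rfl fun j hj => ?_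
        have : ¬ (N + 1 + j ≤ N) := by omega
        simp only [hθ, this, if_false]
        have h2 : N + 1 + j - N - 1 = j := by omega
        rw [h2]
    rw [cesaroV_sub_const θ y hn1]
    congr 1
    obtain ⟨q, t, hqt, htℓ⟩ : ∃ q t, n - N = q * ℓ + t ∧ t = (n - N) % ℓ :=
      ⟨_, _, (Nat.div_add_mod' _ _).symm, rfl⟩
    rw [← htℓ]
    have hcard : (Finset.Icc 1 n).card = n := by rw [Nat.card_Icc]; omega
    rw [Finset.sum_sub_distrib, Finset.sum_const, hcard, hsum, hqt, hmul q t, hw]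
    have hn' : n = (N + t) + q * ℓ := by omega
    have hb : ((n : ℕ) : ℝ) = ((N + t : ℕ) : ℝ) + ((q * ℓ : ℕ) : ℝ) := by
      rw [hn']; push_cast; ring
    rw [← Nat.cast_smul_eq_nsmul ℝ, hb, add_smul]
    abel
  have hwt : ∀ t, Tendsto (fun n : ℕ => (n : ℝ)⁻¹ • w t) atTop (𝓝 0) := by
    intro t
    have h1 : Tendsto (fun n : ℕ => ((n : ℝ))⁻¹) atTop (𝓝 0) :=
      tendsto_inv_atTop_zero.comp tendsto_natCast_atTop_atTop
    simpa using h1.smul_const (w t)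
  have hT0 : Tendsto (fun n => cesaroV θ n - y) atTop (𝓝 0) := by
    rw [Filter.tendsto_def]
    intro U hU
    have hall : ∀ᶠ n : ℕ in atTop, ∀ t ∈ Finset.range ℓ, (n : ℝ)⁻¹ • w t ∈ U :=
      (eventually_all_finset _).mpr fun t _ => (hwt t).eventually_mem hU
    filter_upwards [hall, eventually_ge_atTop (N + 1)] with n h1 h2
    simp only [Set.mem_preimage]
    rw [key n h2]
    exact h1 _ (Finset.mem_range.mpr (Nat.mod_lt _ (by omega)))
  have := hT0.add_const y
  simpa using this

lemma tendsto_cesaroV_iterate_block (p g : ℕ → V) (N ℓ : ℕ) (hℓ : 1 ≤ ℓ) (y : V)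
    (hy : (ℓ : ℝ) • y = ∑ j ∈ Finset.range ℓ, g (j % ℓ)) :
    ∀ k, 1 ≤ k →
      Tendsto (cesaroV^[k] (fun i => if i ≤ N then p i else g ((i - N - 1) % ℓ)))
        atTop (𝓝 y) := by
  intro k hk
  induction k with
  | zero => omega
  | succ k ih =>
    rcases Nat.eq_zero_or_pos k with h0 | h0
    · subst h0
      simpa using tendsto_cesaroV_block p g N ℓ hℓ y hy
    · rw [Function.iterate_succ_apply']
      exact tendsto_cesaroV (ih h0)

lemma sum_getD_map (F : ℕ → V) :
    ∀ is : List ℕ, ∑ j ∈ Finset.range is.length, F (is.getD j 0) = (is.map F).sum := by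
  intro is
  induction is with
  | nil => simp
  | cons a l ih =>
    rw [List.length_cons, Finset.sum_range_succ']
    simp only [List.getD_cons_succ, List.getD_cons_zero, List.map_cons, List.sum_cons]
    rw [ih]
    exact add_comm _ _

lemma exists_rep_list {ι : Type*} [DecidableEq ι] (F : ℕ → V) (t : Finset ι) (c : ι → ℕ)
    (idx : ι → ℕ) :
    ∃ is : List ℕ, is.length = ∑ i ∈ t, c i ∧
      (is.map F).sum = ∑ i ∈ t, c i • F (idx i) := by
  induction t using Finset.induction_on with
  | empty => exact ⟨[], by simp, by simp⟩
  | @insert a t ha ih =>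
    obtain ⟨is, h1, h2⟩ := ih
    refine ⟨List.replicate (c a) (idx a) ++ is, ?_, ?_⟩
    · rw [List.length_append, List.length_replicate, h1, Finset.sum_insert ha]
    · rw [List.map_append, List.sum_append, List.map_replicate, List.sum_replicate, h2,
        Finset.sum_insert ha]

/-- The key step: any finite prefix can be extended so that `cesaroV^[k]` of every
sequence extending the new prefix visits a prescribed neighborhood of the average of
a given cycle. -/
lemma step_lemma_s14 (A : Set V) (f : ℕ → V) (hf : ∀ j, f j ∈ A) (p : ℕ → V)
    (N : ℕ) (k : ℕ) (is : List ℕ) (hs : is ≠ []) (U : Set V)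
    (hU : U ∈ 𝓝 (((is.length : ℝ))⁻¹ • (is.map f).sum)) (hk : 1 ≤ k) :
    ∃ (M : ℕ) (p' : ℕ → V), N < M ∧ (∀ i ≤ N, p' i = p i) ∧ (∀ i, N < i → p' i ∈ A) ∧
      ∃ n, 1 ≤ n ∧ n ≤ M ∧ ∀ q : ℕ → V, (∀ i, 1 ≤ i → i ≤ M → q i = p' i) →
        cesaroV^[k] q n ∈ U := by
  set ℓ := is.length with hℓdef
  have hℓ : 1 ≤ ℓ := List.length_pos_iff.mpr hs
  set g : ℕ → V := fun j => f (is.getD j 0) with hg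
  set y : V := ((ℓ : ℝ))⁻¹ • (is.map f).sum with hydef
  have hy : (ℓ : ℝ) • y = ∑ j ∈ Finset.range ℓ, g (j % ℓ) := by
    have h1 : ∑ j ∈ Finset.range ℓ, g (j % ℓ) = ∑ j ∈ Finset.range ℓ, g j :=
      Finset.sum_congr rfl fun j hj => by rw [Nat.mod_eq_of_lt (Finset.mem_range.mp hj)]
    rw [h1, hydef]
    have h2 : ∑ j ∈ Finset.range ℓ, g j = (is.map f).sum := sum_getD_map f is
    rw [h2, smul_inv_smul₀ (by positivity : (ℓ : ℝ) ≠ 0)]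
  have htend := tendsto_cesaroV_iterate_block p g N ℓ hℓ y hy k hk
  obtain ⟨n, hn1, hn2⟩ :=
    ((htend.eventually_mem hU).and (eventually_ge_atTop (N + 1))).exists
  refine ⟨n, fun i => if i ≤ N then p i else g ((i - N - 1) % ℓ), by omega,
    fun i hi => by simp [hi], fun i hi => by
      have : ¬ i ≤ N := by omega
      simp only [this, if_false]; exact hf _, n, by omega, le_rfl, ?_⟩
  intro q hq
  have heq := cesaroV_iterate_congr (θ₁ := q)
    (θ₂ := fun i => if i ≤ N then p i else g ((i - N - 1) % ℓ)) (n := n) hq k hk n le_rfl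
  rw [heq]
  exact hn1

/-- Recursive construction of a sequence in `A` fulfilling countably many tasks. -/
lemma exists_theta (A : Set V) (f : ℕ → V) (hf : ∀ j, f j ∈ A)
    (B : ℕ → V → Set V) (hB : ∀ m y, B m y ∈ 𝓝 y)
    (p₀ : ℕ → V) (hp₀ : ∀ i, p₀ i ∈ A) (N₀ : ℕ)
    (e : ℕ → ℕ × ℕ × List ℕ) :
    ∃ θ : ℕ → V, (∀ i, θ i ∈ A) ∧ (∀ i ≤ N₀, θ i = p₀ i) ∧
      ∀ j : ℕ, 1 ≤ (e j).1 → (e j).2.2 ≠ [] →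
        ∃ n, 1 ≤ n ∧ cesaroV^[(e j).1] θ n ∈
          B (e j).2.1 ((((e j).2.2.length : ℝ))⁻¹ • ((e j).2.2.map f).sum) := by
  classical
  set tgt : ℕ → Set V := fun j =>
    B (e j).2.1 ((((e j).2.2.length : ℝ))⁻¹ • ((e j).2.2.map f).sum) with htgt
  have exists_step : ∀ (N : ℕ) (p : ℕ → V) (j : ℕ), ∃ (M : ℕ) (p' : ℕ → V),
      N < M ∧ (∀ i ≤ N, p' i = p i) ∧ (∀ i, N < i → p' i ∈ A) ∧
      (1 ≤ (e j).1 → (e j).2.2 ≠ [] → ∃ n, 1 ≤ n ∧ n ≤ M ∧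
        ∀ q : ℕ → V, (∀ i, 1 ≤ i → i ≤ M → q i = p' i) →
          cesaroV^[(e j).1] q n ∈ tgt j) := by
    intro N p j
    by_cases h : 1 ≤ (e j).1 ∧ (e j).2.2 ≠ []
    · obtain ⟨M, p', h1, h2, h3, n, hn1, hn2, hn3⟩ :=
        step_lemma_s14 A f hf p N (e j).1 (e j).2.2 h.2 (tgt j) (hB _ _) h.1
      exact ⟨M, p', h1, h2, h3, fun _ _ => ⟨n, hn1, hn2, hn3⟩⟩
    · refine ⟨N + 1, fun i => if i ≤ N then p i else f 0, by omega,
        fun i hi => by simp [hi], fun i hi => by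
          have : ¬ i ≤ N := by omega
          simp only [this, if_false]; exact hf 0, fun h1 h2 => absurd ⟨h1, h2⟩ h⟩
  choose Mf pf hlt hagree hmemA htask using exists_step
  set st : ℕ → ℕ × (ℕ → V) := fun j => Nat.rec (N₀, p₀)
    (fun j s => (Mf s.1 s.2 j, pf s.1 s.2 j)) j with hst
  set Ns : ℕ → ℕ := fun j => (st j).1 with hNs
  set Ps : ℕ → (ℕ → V) := fun j => (st j).2 with hPs
  have hN_lt : ∀ j, Ns j < Ns (j + 1) := fun j => hlt _ _ j
  have hN_mono : ∀ j d, Ns j ≤ Ns (j + d) := by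
    intro j d
    induction d with
    | zero => exact le_rfl
    | succ d ih => exact ih.trans (hN_lt (j + d)).le
  have hN_ge : ∀ j, j ≤ Ns j := by
    intro j
    induction j with
    | zero => exact Nat.zero_le _
    | succ j ih => exact Nat.succ_le_of_lt (lt_of_le_of_lt ih (hN_lt j))
  have hP_agree : ∀ j d, ∀ i ≤ Ns j, Ps (j + d) i = Ps j i := by
    intro j d
    induction d with
    | zero => intro i _; rfl
    | succ d ih =>
      intro i hi
      have h1 : Ps (j + (d + 1)) i = Ps (j + d) i := by
        have := hagree (Ns (j + d)) (Ps (j + d)) (j + d) i (hi.trans (hN_mono j d))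
        exact this
      rw [h1, ih i hi]
  have hP_memA : ∀ j i, Ps j i ∈ A := by
    intro j
    induction j with
    | zero => exact hp₀
    | succ j ih =>
      intro i
      rcases le_or_gt i (Ns j) with hi | hi
      · rw [show Ps (j + 1) i = Ps j i from hagree (Ns j) (Ps j) j i hi]
        exact ih i
      · exact hmemA (Ns j) (Ps j) j i hi
  set θ : ℕ → V := fun i => Ps i i with hθ
  have hθP : ∀ j i, i ≤ Ns j → θ i = Ps j i := by
    intro j i hi
    rcases le_total i j with hij | hij
    · have : Ps j i = Ps i i := by
        have := hP_agree i (j - i) i (hN_ge i)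
        rwa [Nat.add_sub_cancel' hij] at this
      rw [hθ, this]
    · have : Ps i i = Ps j i := by
        have := hP_agree j (i - j) i hi
        rwa [Nat.add_sub_cancel' hij] at this
      rw [hθ]; exact this
  refine ⟨θ, fun i => hP_memA i i, fun i hi => hθP 0 i hi, ?_⟩
  intro j hk hne
  obtain ⟨n, hn1, hn2, hn3⟩ := htask (Ns j) (Ps j) j hk hne
  refine ⟨n, hn1, ?_⟩
  exact hn3 θ fun i _ hi2 => hθP (j + 1) i hi2

/-- Density of cycle averages in the convex hull. -/
lemma convexHull_subset_closure_D (A : Set V) (f : ℕ → V)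
    (hA : A ⊆ closure (Set.range f)) :
    convexHull ℝ A ⊆ closure {y : V | ∃ is : List ℕ, is ≠ [] ∧
      y = ((is.length : ℝ))⁻¹ • (is.map f).sum} := by
  classical
  set D := {y : V | ∃ is : List ℕ, is ≠ [] ∧
      y = ((is.length : ℝ))⁻¹ • (is.map f).sum} with hD
  have claim1 : convexHull ℝ (Set.range f) ⊆ closure D := by
    intro y hy
    rw [_root_.convexHull_eq] at hy
    obtain ⟨ι, t, w, z, hw0, hw1, hz, hyeq⟩ := hy
    rw [Finset.centerMass_eq_of_sum_1 _ _ hw1] at hyeq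
    have htne : t.Nonempty := Finset.nonempty_of_sum_ne_zero (by rw [hw1]; exact one_ne_zero)
    obtain ⟨i₀, hi₀⟩ := htne
    set idx : ι → ℕ := fun i => if h : ∃ j, f j = z i then h.choose else 0 with hidx_def
    have hidx : ∀ i ∈ t, f (idx i) = z i := by
      intro i hi
      obtain ⟨j, hj⟩ := hz i hi
      simp only [hidx_def]
      rw [dif_pos ⟨j, hj⟩]
      exact (⟨j, hj⟩ : ∃ j, f j = z i).choose_spec
    set c : ℕ → ι → ℕ := fun ℓ i =>
      if i = i₀ then ℓ - (∑ i' ∈ t.erase i₀, ⌊w i' * ℓ⌋₊) else ⌊w i * ℓ⌋₊ with hc_def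
    have herase_le : ∀ ℓ : ℕ, (∑ i' ∈ t.erase i₀, ⌊w i' * ℓ⌋₊) ≤ ℓ := by
      intro ℓ
      have h1 : ((∑ i' ∈ t.erase i₀, ⌊w i' * ℓ⌋₊ : ℕ) : ℝ) ≤ (ℓ : ℝ) := by
        push_cast
        calc ∑ i' ∈ t.erase i₀, (⌊w i' * ℓ⌋₊ : ℝ)
            ≤ ∑ i' ∈ t.erase i₀, w i' * ℓ := by
              refine Finset.sum_le_sum fun i' hi' => Nat.floor_le ?_
              exact mul_nonneg (hw0 i' (Finset.erase_subset _ _ hi')) (Nat.cast_nonneg ℓ)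
          _ = (∑ i' ∈ t.erase i₀, w i') * ℓ := (Finset.sum_mul _ _ _).symm
          _ ≤ 1 * (ℓ : ℝ) := by
              refine mul_le_mul_of_nonneg_right ?_ (Nat.cast_nonneg ℓ)
              rw [← hw1]
              exact Finset.sum_le_sum_of_subset_of_nonneg (Finset.erase_subset _ _)
                (fun i hi _ => hw0 i hi)
          _ = (ℓ : ℝ) := one_mul _
      exact_mod_cast h1
    have hsum_c : ∀ ℓ, ∑ i ∈ t, c ℓ i = ℓ := by
      intro ℓ
      rw [← Finset.insert_erase hi₀, Finset.sum_insert (Finset.notMem_erase _ _)]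
      have h2 : ∑ i' ∈ t.erase i₀, c ℓ i' = ∑ i' ∈ t.erase i₀, ⌊w i' * ℓ⌋₊ :=
        Finset.sum_congr rfl fun i' hi' => by
          simp [hc_def, Finset.ne_of_mem_erase hi']
      rw [h2]
      have h3 : c ℓ i₀ = ℓ - (∑ i' ∈ t.erase i₀, ⌊w i' * ℓ⌋₊) := by
        simp [hc_def]
      rw [h3]
      have := herase_le ℓ
      omega
    have hfloor_lim : ∀ r : ℝ, 0 ≤ r →
        Tendsto (fun ℓ : ℕ => (⌊r * ℓ⌋₊ : ℝ) / ℓ) atTop (𝓝 r) := by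
      intro r hr
      apply tendsto_of_tendsto_of_tendsto_of_le_of_le'
        (g := fun ℓ : ℕ => r - 1 / ℓ) (h := fun _ : ℕ => r)
      · have : Tendsto (fun ℓ : ℕ => 1 / (ℓ : ℝ)) atTop (𝓝 0) :=
          tendsto_one_div_atTop_nhds_zero_nat
        simpa using tendsto_const_nhds.sub this
      · exact tendsto_const_nhds
      · filter_upwards [eventually_ge_atTop 1] with ℓ hℓ
        have hℓ0 : (0 : ℝ) < ℓ := by positivity
        have h1 : r * ℓ - 1 ≤ (⌊r * ℓ⌋₊ : ℝ) := (Nat.sub_one_lt_floor (r * ℓ)).le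
        have h2 : r - 1 / ℓ = (r * ℓ - 1) / ℓ := by field_simp
        rw [h2]
        gcongr
      · filter_upwards [eventually_ge_atTop 1] with ℓ hℓ
        have hℓ0 : (0 : ℝ) < ℓ := by positivity
        have h1 : (⌊r * ℓ⌋₊ : ℝ) ≤ r * ℓ := Nat.floor_le (mul_nonneg hr (Nat.cast_nonneg ℓ))
        calc (⌊r * ℓ⌋₊ : ℝ) / ℓ ≤ (r * ℓ) / ℓ := by gcongr
          _ = r := by field_simp
    have hcoef : ∀ i ∈ t, Tendsto (fun ℓ : ℕ => ((c ℓ i : ℕ) : ℝ) / ℓ) atTop (𝓝 (w i)) := by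
      intro i hi
      by_cases hii : i = i₀
      · subst hii
        have heq : ∀ ℓ : ℕ, ((c ℓ i : ℕ) : ℝ) / ℓ
            = (ℓ : ℝ) / ℓ - ∑ i' ∈ t.erase i, (⌊w i' * ℓ⌋₊ : ℝ) / ℓ := by
          intro ℓ
          have h3 : c ℓ i = ℓ - (∑ i' ∈ t.erase i, ⌊w i' * ℓ⌋₊) := by
            simp [hc_def]
          rw [h3, Nat.cast_sub (herase_le ℓ), sub_div]
          congr 1
          rw [Nat.cast_sum, Finset.sum_div]
        have hw_eq : w i = 1 - ∑ i' ∈ t.erase i, w i' := by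
          rw [← hw1, ← Finset.insert_erase hi₀,
            Finset.sum_insert (Finset.notMem_erase _ _),
            Finset.erase_insert (Finset.notMem_erase _ _)]
          ring
        have hlim : Tendsto
            (fun ℓ : ℕ => (ℓ : ℝ) / ℓ - ∑ i' ∈ t.erase i, (⌊w i' * ℓ⌋₊ : ℝ) / ℓ)
            atTop (𝓝 (1 - ∑ i' ∈ t.erase i, w i')) := by
          apply Tendsto.sub
          · apply Tendsto.congr' (f₁ := fun _ : ℕ => (1 : ℝ))
            · filter_upwards [eventually_ge_atTop 1] with ℓ hℓ
              have : (ℓ : ℝ) ≠ 0 := by positivity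
              rw [div_self this]
            · exact tendsto_const_nhds
          · exact tendsto_finset_sum _ fun i' hi' =>
              hfloor_lim (w i') (hw0 i' (Finset.erase_subset _ _ hi'))
        rw [hw_eq]
        exact hlim.congr fun ℓ => (heq ℓ).symm
      · have heq : ∀ ℓ : ℕ, ((c ℓ i : ℕ) : ℝ) / ℓ = (⌊w i * ℓ⌋₊ : ℝ) / ℓ := by
          intro ℓ
          have : c ℓ i = ⌊w i * ℓ⌋₊ := by simp [hc_def, hii]
          rw [this]
        exact (hfloor_lim (w i) (hw0 i hi)).congr fun ℓ => (heq ℓ).symm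
    have htend : Tendsto (fun ℓ : ℕ => ∑ i ∈ t, (((c ℓ i : ℕ) : ℝ) / ℓ) • z i)
        atTop (𝓝 y) := by
      rw [← hyeq]
      exact tendsto_finset_sum _ fun i hi => (hcoef i hi).smul_const (z i)
    apply mem_closure_of_tendsto htend
    filter_upwards [eventually_ge_atTop 1] with ℓ hℓ
    obtain ⟨is, hlen, hsum⟩ := exists_rep_list f t (c ℓ) idx
    have hisne : is ≠ [] := by
      apply List.length_pos_iff_ne_nil.mp
      rw [hlen, hsum_c ℓ]; omega
    refine ⟨is, hisne, ?_⟩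
    rw [hlen, hsum_c ℓ, hsum, Finset.smul_sum]
    refine Finset.sum_congr rfl fun i hi => ?_
    rw [← hidx i hi, ← Nat.cast_smul_eq_nsmul ℝ, smul_smul]
    congr 1
    rw [div_eq_inv_mul]
  have h2 : convexHull ℝ A ⊆ closure (convexHull ℝ (Set.range f)) := by
    apply convexHull_min
    · exact hA.trans (closure_mono (subset_convexHull ℝ _))
    · exact (convex_convexHull ℝ _).closure
  refine h2.trans ?_
  calc closure (convexHull ℝ (Set.range f)) ⊆ closure (closure D) := closure_mono claim1
    _ = closure D := closure_closure

end Aux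

/-- Theorem 3.1: if `V` is a separable, metrizable, locally convex topological vector space
over `ℝ` and `A ⊆ V` is arbitrary, then the set of sequences `θ ∈ A^ℕ` such that, for every
`k ≥ 1`, `([T^k(θ)]_n)_{n≥1}` is dense in `conv(A)`, is a dense `G_δ` subset of `A^ℕ` with
the product topology. -/
theorem cesaro_generic_dense (V : Type*) [AddCommGroup V] [Module ℝ V]
    [TopologicalSpace V] [IsTopologicalAddGroup V] [ContinuousSMul ℝ V]
    [LocallyConvexSpace ℝ V] [TopologicalSpace.MetrizableSpace V]
    [TopologicalSpace.SeparableSpace V]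
    (A : Set V) :
    Dense {θ : ℕ → A | ∀ k, 1 ≤ k →
        convexHull ℝ A ⊆
          closure {x : V | ∃ n, 1 ≤ n ∧ x = cesaroV^[k] (fun i => (θ i : V)) n}} ∧
    IsGδ {θ : ℕ → A | ∀ k, 1 ≤ k →
        convexHull ℝ A ⊆
          closure {x : V | ∃ n, 1 ≤ n ∧ x = cesaroV^[k] (fun i => (θ i : V)) n}} := by
  classical
  letI : MetricSpace V := TopologicalSpace.metrizableSpaceMetric V
  set Θ : Set (ℕ → A) := {θ : ℕ → A | ∀ k, 1 ≤ k →
      convexHull ℝ A ⊆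
        closure {x : V | ∃ n, 1 ≤ n ∧ x = cesaroV^[k] (fun i => (θ i : V)) n}} with hΘ
  have hcont : ∀ (k n : ℕ), Continuous fun θ : ℕ → A => cesaroV^[k] (fun i => (θ i : V)) n :=
    fun k n => (continuous_cesaroV_iterate k n).comp
      (continuous_pi fun i => continuous_subtype_val.comp (continuous_apply i))
  constructor
  · -- Dense
    rcases isEmpty_or_nonempty (ℕ → A) with hE | hNE
    · exact fun x => isEmptyElim x
    · obtain ⟨θ_wit⟩ := hNE
      have hAne : A.Nonempty := ⟨(θ_wit 0 : V), (θ_wit 0).2⟩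
      obtain ⟨A₀, hA₀A, hA₀cnt, hA₀cl⟩ :=
        (TopologicalSpace.IsSeparable.of_separableSpace A).exists_countable_dense_subset
      have hA₀ne : A₀.Nonempty := by
        obtain ⟨a, ha⟩ := hAne
        exact closure_nonempty_iff.mp ⟨a, hA₀cl ha⟩
      obtain ⟨f, hf_range⟩ := Set.Countable.exists_eq_range hA₀cnt hA₀ne
      have hf : ∀ j, f j ∈ A := fun j => hA₀A (hf_range ▸ Set.mem_range_self j)
      have hAcl : A ⊆ closure (Set.range f) := by rw [← hf_range]; exact hA₀cl
      set e : ℕ → ℕ × ℕ × List ℕ := fun n => Denumerable.ofNat (ℕ × ℕ × List ℕ) n with he_def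
      have he : Function.Surjective e :=
        fun t => ⟨Encodable.encode t, Denumerable.ofNat_encode t⟩
      have hconstr : ∀ N₀ : ℕ, ∀ θ₀ : ℕ → A,
          ∃ θ : ℕ → A, (∀ i ≤ N₀, θ i = θ₀ i) ∧ θ ∈ Θ := by
        intro N₀ θ₀
        obtain ⟨θv, hθA, hθ₀, htasks⟩ := exists_theta A f hf
          (fun m y => Metric.ball y (1 / (m + 1)))
          (fun m y => Metric.ball_mem_nhds y (by positivity))
          (fun i => (θ₀ i : V)) (fun i => (θ₀ i).2) N₀ e
        refine ⟨fun i => ⟨θv i, hθA i⟩,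
          fun i hi => Subtype.ext (by simpa using hθ₀ i hi), ?_⟩
        intro k hk
        show convexHull ℝ A ⊆ closure {x : V | ∃ n, 1 ≤ n ∧ x = cesaroV^[k] θv n}
        refine (convexHull_subset_closure_D A f hAcl).trans ?_
        rw [show closure {x : V | ∃ n, 1 ≤ n ∧ x = cesaroV^[k] θv n}
            = closure (closure {x : V | ∃ n, 1 ≤ n ∧ x = cesaroV^[k] θv n})
            from closure_closure.symm]
        apply closure_mono
        rintro y ⟨is, hisne, rfl⟩
        rw [Metric.mem_closure_iff]
        intro ε hε
        obtain ⟨m, hm⟩ := exists_nat_one_div_lt hε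
        obtain ⟨j, hj⟩ := he (k, m, is)
        obtain ⟨n, hn1, hn2⟩ := htasks j (by rw [hj]; exact hk)
          (by rw [hj]; exact hisne)
        simp only [hj] at hn2
        refine ⟨cesaroV^[k] θv n, ⟨n, hn1, rfl⟩, ?_⟩
        rw [dist_comm]
        exact lt_trans (Metric.mem_ball.mp hn2) hm
      intro θ₀
      choose Tm hTm1 hTm2 using fun m => hconstr m θ₀
      have htend : Tendsto Tm atTop (𝓝 θ₀) := by
        rw [tendsto_pi_nhds]
        intro i
        apply Tendsto.congr' (f₁ := fun _ => θ₀ i)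
        · filter_upwards [eventually_ge_atTop i] with m hm
          exact (hTm1 m i hm).symm
        · exact tendsto_const_nhds
      exact mem_closure_of_tendsto htend (Filter.Eventually.of_forall hTm2)
  · -- Gδ
    obtain ⟨cc, hcc_sub, hcc_cnt, hcc_cl⟩ :=
      (TopologicalSpace.IsSeparable.of_separableSpace (convexHull ℝ A)).exists_countable_dense_subset
    have hset : Θ = ⋂ (k : ℕ), ⋂ (_ : 1 ≤ k), ⋂ (y ∈ cc), ⋂ (m : ℕ),
        {θ : ℕ → A | ∃ n, 1 ≤ n ∧
          cesaroV^[k] (fun i => (θ i : V)) n ∈ Metric.ball y (1 / (m + 1))} := by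
      ext θ
      simp only [hΘ, Set.mem_setOf_eq, Set.mem_iInter]
      constructor
      · intro h k hk y hy m
        have hy' := h k hk (hcc_sub hy)
        rw [Metric.mem_closure_iff] at hy'
        obtain ⟨b, ⟨n, hn1, rfl⟩, hb2⟩ := hy' (1 / (m + 1)) (by positivity)
        exact ⟨n, hn1, by rwa [Metric.mem_ball, dist_comm]⟩
      · intro h k hk
        have hsub : cc ⊆
            closure {x : V | ∃ n, 1 ≤ n ∧ x = cesaroV^[k] (fun i => (θ i : V)) n} := by
          intro y hy
          rw [Metric.mem_closure_iff]
          intro ε hε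
          obtain ⟨m, hm⟩ := exists_nat_one_div_lt hε
          obtain ⟨n, hn1, hn2⟩ := h k hk y hy m
          refine ⟨cesaroV^[k] (fun i => (θ i : V)) n, ⟨n, hn1, rfl⟩, ?_⟩
          rw [dist_comm]
          exact lt_trans (Metric.mem_ball.mp hn2) hm
        refine hcc_cl.trans ?_
        rw [show closure {x : V | ∃ n, 1 ≤ n ∧ x = cesaroV^[k] (fun i => (θ i : V)) n}
            = closure (closure {x : V | ∃ n, 1 ≤ n ∧ x = cesaroV^[k] (fun i => (θ i : V)) n})
            from closure_closure.symm]
        exact closure_mono hsub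
    rw [hset]
    refine IsGδ.iInter fun k => ?_
    refine IsGδ.iInter fun hk => ?_
    refine IsGδ.biInter hcc_cnt fun y hy => ?_
    refine IsGδ.iInter fun m => ?_
    apply IsOpen.isGδ
    have hEq : {θ : ℕ → A | ∃ n, 1 ≤ n ∧
          cesaroV^[k] (fun i => (θ i : V)) n ∈ Metric.ball y (1 / (m + 1))}
        = ⋃ (n : ℕ), ⋃ (_ : 1 ≤ n),
          ((fun θ : ℕ → A => cesaroV^[k] (fun i => (θ i : V)) n) ⁻¹'
            Metric.ball y (1 / (m + 1))) := by
      ext θ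
      simp [Set.mem_iUnion]
    rw [hEq]
    exact isOpen_iUnion fun n => isOpen_iUnion fun hn =>
      Metric.isOpen_ball.preimage (hcont k n)
end

section
/- Let A ⊆ [0,1] and let a ∈ A^ℕ be a sequence with all terms in A. If for some n ≥ 1 we have [T(a)]_n < 1/8, then [T²(a)]_n < 15/16. -/
/-- Let `A ⊆ [0,1]` and let `a` be a sequence with all terms in `A`. If for some `n ≥ 1`
we have `[T(a)]_n < 1/8`, then `[T²(a)]_n < 15/16`. -/
theorem cesaro_sq_bound (A : Set ℝ) (hA : A ⊆ Set.Icc (0 : ℝ) 1)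
    (a : ℕ → ℝ) (ha : ∀ i, 1 ≤ i → a i ∈ A) (n : ℕ) (hn : 1 ≤ n)
    (h : cesaro a n < 1 / 8) :
    cesaro (cesaro a) n < 15 / 16 := by
  have hn0 : (0:ℝ) < n := by exact_mod_cast hn
  have ha0 : ∀ i, 1 ≤ i → 0 ≤ a i := fun i hi => (hA (ha i hi)).1
  have ha1 : ∀ i, 1 ≤ i → a i ≤ 1 := fun i hi => (hA (ha i hi)).2
  set m := n / 2 with hm
  have hmn : m ≤ n := Nat.div_le_self n 2
  have h2m : 2 * m ≤ n := by omega
  -- S n < n/8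
  have hSn : ∑ i ∈ Finset.Icc 1 n, a i ≤ (n : ℝ) / 8 := by
    have := h
    rw [cesaro, div_lt_iff₀ hn0] at this
    linarith
  -- bound 1 : cesaro a k ≤ 1 for 1 ≤ k
  have hbound1 : ∀ k ∈ Finset.Ioc 0 m, cesaro a k ≤ 1 := by
    intro k hk
    obtain ⟨hk1, hk2⟩ := Finset.mem_Ioc.mp hk
    have hk0 : (0:ℝ) < k := by exact_mod_cast hk1
    rw [cesaro, div_le_one hk0]
    calc ∑ i ∈ Finset.Icc 1 k, a i ≤ ∑ _i ∈ Finset.Icc 1 k, (1:ℝ) := by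
          apply Finset.sum_le_sum
          intro i hi
          exact ha1 i (Finset.mem_Icc.mp hi).1
      _ = k := by simp
  -- bound 2 : cesaro a k ≤ 1/4 for m < k ≤ n
  have hbound2 : ∀ k ∈ Finset.Ioc m n, cesaro a k ≤ 1/4 := by
    intro k hk
    obtain ⟨hk1, hk2⟩ := Finset.mem_Ioc.mp hk
    have hk1' : 1 ≤ k := by omega
    have hk0 : (0:ℝ) < k := by exact_mod_cast hk1'
    rw [cesaro, div_le_iff₀ hk0]
    have hsub : ∑ i ∈ Finset.Icc 1 k, a i ≤ ∑ i ∈ Finset.Icc 1 n, a i := by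
      apply Finset.sum_le_sum_of_subset_of_nonneg (Finset.Icc_subset_Icc_right hk2)
      intro i hi _
      exact ha0 i (Finset.mem_Icc.mp hi).1
    have hnk : (n:ℝ) ≤ 2 * k := by
      have : n ≤ 2 * k := by omega
      exact_mod_cast this
    linarith
  -- split the sum
  have hsplit : ∑ k ∈ Finset.Icc 1 n, cesaro a k
      = ∑ k ∈ Finset.Ioc 0 m, cesaro a k + ∑ k ∈ Finset.Ioc m n, cesaro a k := by
    rw [show Finset.Icc 1 n = Finset.Ioc 0 n from Finset.Icc_add_one_left_eq_Ioc 0 n,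
      ← Finset.sum_Ioc_consecutive _ (Nat.zero_le m) hmn]
  have hs1 : ∑ k ∈ Finset.Ioc 0 m, cesaro a k ≤ (m : ℝ) := by
    calc ∑ k ∈ Finset.Ioc 0 m, cesaro a k ≤ ∑ _k ∈ Finset.Ioc 0 m, (1:ℝ) :=
          Finset.sum_le_sum hbound1
      _ = (m : ℝ) := by simp
  have hs2 : ∑ k ∈ Finset.Ioc m n, cesaro a k ≤ ((n : ℝ) - m) * (1/4) := by
    calc ∑ k ∈ Finset.Ioc m n, cesaro a k ≤ ∑ _k ∈ Finset.Ioc m n, (1/4 : ℝ) :=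
          Finset.sum_le_sum hbound2
      _ = ((n : ℝ) - m) * (1/4) := by
          rw [Finset.sum_const, Nat.card_Ioc, nsmul_eq_mul, Nat.cast_sub hmn]
  have hm2 : (m : ℝ) * 2 ≤ n := by exact_mod_cast by omega
  rw [show cesaro (cesaro a) n = (∑ k ∈ Finset.Icc 1 n, cesaro a k) / n from rfl,
    div_lt_iff₀ hn0, hsplit]
  linarith
end

section
/- Let A ⊆ [0,1]. Then there is no sequence a ∈ A^ℕ together with a sequence of indices (λ_n)_{n≥1} of natural numbers such that [T(a)]_{λ_n} → 0 and [T²(a)]_{λ_n} → 1 as n → ∞; in particular, simultaneous approximation of arbitrary targets by the iterates of the Cesàro operator is impossible when all terms of the sequence lie in [0,1]. -/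
lemma sum_inv_sqrt (n : ℕ) : ∑ k ∈ Finset.Icc 1 n, 1 / Real.sqrt k ≤ 2 * Real.sqrt n := by
  induction n with
  | zero => simp
  | succ n ih =>
    rw [Finset.sum_Icc_succ_top (by omega)]
    have h1 : Real.sqrt n * Real.sqrt (n+1) ≤ (2*n+1)/2 := by
      nlinarith [Real.sq_sqrt (by positivity : (0:ℝ) ≤ (n:ℝ)),
        Real.sq_sqrt (by positivity : (0:ℝ) ≤ (n:ℝ)+1),
        Real.sqrt_nonneg (n:ℝ), Real.sqrt_nonneg ((n:ℝ)+1),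
        sq_nonneg (Real.sqrt n - Real.sqrt (n+1))]
    have h2 : (0:ℝ) < Real.sqrt (n+1) := Real.sqrt_pos.mpr (by positivity)
    have h3 : (1:ℝ)/Real.sqrt (n+1) * Real.sqrt (n+1) = 1 := div_mul_cancel₀ 1 h2.ne'
    have key : 2 * Real.sqrt n + 1 / Real.sqrt (n+1) ≤ 2 * Real.sqrt (n+1) := by
      nlinarith [Real.sq_sqrt (by positivity : (0:ℝ) ≤ (n:ℝ)+1), h2]
    push_cast
    linarith

lemma key_ineq (a : ℕ → ℝ) (ha : ∀ i, 1 ≤ i → a i ∈ Set.Icc (0:ℝ) 1) (n : ℕ) (hn : 1 ≤ n) :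
    cesaro (cesaro a) n ≤ 2 * Real.sqrt (cesaro a n) := by
  set S : ℝ := ∑ i ∈ Finset.Icc 1 n, a i with hS
  have hnpos : (0:ℝ) < n := by exact_mod_cast hn
  have hSnn : 0 ≤ S := Finset.sum_nonneg fun i hi => (ha i (Finset.mem_Icc.mp hi).1).1
  have stepA : ∀ k ∈ Finset.Icc 1 n, cesaro a k ≤ Real.sqrt S / Real.sqrt k := by
    intro k hk
    obtain ⟨hk1, hkn⟩ := Finset.mem_Icc.mp hk
    have hkpos : (0:ℝ) < k := by exact_mod_cast hk1
    set Sk : ℝ := ∑ i ∈ Finset.Icc 1 k, a i with hSk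
    have hSknn : 0 ≤ Sk := Finset.sum_nonneg fun i hi => (ha i (Finset.mem_Icc.mp hi).1).1
    have hSkS : Sk ≤ S := by
      apply Finset.sum_le_sum_of_subset_of_nonneg
      · intro x hx; simp only [Finset.mem_Icc] at *; omega
      · intro i hi _; exact (ha i (Finset.mem_Icc.mp hi).1).1
    have hSkk : Sk ≤ k := by
      calc Sk ≤ ∑ i ∈ Finset.Icc 1 k, (1:ℝ) :=
            Finset.sum_le_sum fun i hi => (ha i (Finset.mem_Icc.mp hi).1).2
        _ = k := by simp [Nat.card_Icc]
    have hsq : Sk ≤ Real.sqrt (S * k) := by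
      rw [show Sk = Real.sqrt (Sk^2) by rw [Real.sqrt_sq hSknn]]
      apply Real.sqrt_le_sqrt
      nlinarith
    have hck : cesaro a k = Sk / k := rfl
    rw [hck, div_le_div_iff₀ hkpos (Real.sqrt_pos.mpr hkpos)]
    calc Sk * Real.sqrt k ≤ Real.sqrt (S * k) * Real.sqrt k :=
          mul_le_mul_of_nonneg_right hsq (Real.sqrt_nonneg _)
      _ = Real.sqrt S * (Real.sqrt k * Real.sqrt k) := by
          rw [Real.sqrt_mul hSnn]; ring
      _ = Real.sqrt S * k := by rw [Real.mul_self_sqrt hkpos.le]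
  have stepB : ∑ k ∈ Finset.Icc 1 n, cesaro a k ≤ Real.sqrt S * (2 * Real.sqrt n) := by
    calc ∑ k ∈ Finset.Icc 1 n, cesaro a k ≤ ∑ k ∈ Finset.Icc 1 n, Real.sqrt S / Real.sqrt k :=
          Finset.sum_le_sum stepA
      _ = Real.sqrt S * ∑ k ∈ Finset.Icc 1 n, 1 / Real.sqrt k := by
          rw [Finset.mul_sum]; congr 1; ext k; ring
      _ ≤ Real.sqrt S * (2 * Real.sqrt n) :=
          mul_le_mul_of_nonneg_left (sum_inv_sqrt n) (Real.sqrt_nonneg _)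
  have hca : cesaro a n = S / n := rfl
  have hc2 : cesaro (cesaro a) n = (∑ k ∈ Finset.Icc 1 n, cesaro a k) / n := rfl
  have hsqrt : Real.sqrt (cesaro a n) = Real.sqrt S / Real.sqrt n := by
    rw [hca, Real.sqrt_div hSnn]
  have hn2 : (0:ℝ) < Real.sqrt n := Real.sqrt_pos.mpr hnpos
  have hss : Real.sqrt n * Real.sqrt n = n := Real.mul_self_sqrt hnpos.le
  rw [hc2, hsqrt, div_le_iff₀ hnpos]
  calc ∑ k ∈ Finset.Icc 1 n, cesaro a k ≤ Real.sqrt S * (2 * Real.sqrt n) := stepB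
    _ = 2 * (Real.sqrt S / Real.sqrt n) * n := by
        field_simp
        linear_combination Real.sqrt S * hss

/-- Let `A ⊆ [0,1]`. There is no sequence `a` with all terms in `A` together with a
sequence of indices `(λ_n)` such that `[T(a)]_{λ_n} → 0` and `[T²(a)]_{λ_n} → 1`. -/
theorem no_simultaneous_approximation (A : Set ℝ) (hA : A ⊆ Set.Icc (0 : ℝ) 1) :
    ¬ ∃ (a : ℕ → ℝ) (lam : ℕ → ℕ), (∀ i, 1 ≤ i → a i ∈ A) ∧ (∀ n, 1 ≤ lam n) ∧
      Filter.Tendsto (fun n => cesaro a (lam n)) Filter.atTop (nhds 0) ∧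
      Filter.Tendsto (fun n => cesaro (cesaro a) (lam n)) Filter.atTop (nhds 1) := by
  rintro ⟨a, lam, haA, hlam, h1, h2⟩
  have ha : ∀ i, 1 ≤ i → a i ∈ Set.Icc (0:ℝ) 1 := fun i hi => hA (haA i hi)
  have hle : ∀ n, cesaro (cesaro a) (lam n) ≤ 2 * Real.sqrt (cesaro a (lam n)) :=
    fun n => key_ineq a ha (lam n) (hlam n)
  have hsq : Filter.Tendsto (fun n => 2 * Real.sqrt (cesaro a (lam n))) Filter.atTop (nhds 0) := by
    have : Filter.Tendsto (fun n => Real.sqrt (cesaro a (lam n))) Filter.atTop (nhds 0) := by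
      have := (Real.continuous_sqrt.tendsto 0).comp h1
      simpa [Function.comp_def] using this
    simpa using this.const_mul 2
  have : (1:ℝ) ≤ 0 := le_of_tendsto_of_tendsto' h2 hsq hle
  linarith
end
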